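/- arXiv:2308.09696 — 5 statements merged into one kernel-verified Lean document; each statement's English description precedes it below -/
import Mathlib

section
/- For n ≥ 3, two vertices A and B of the inclusion graph on nonempty proper subsets of {1,...,n} are at distance 3 if and only if B is the complement of A. -/
open SimpleGraph Finset

variable {V : Type*}

/-- A set of vertices is resolving if distance vectors to it distinguish vertices. -/
def IsResolving (G : SimpleGraph V) (S : Set V) : Prop :=
  ∀ u v : V, (∀ w ∈ S, G.dist u w = G.dist v w) → u = v

/-- The metric dimension: the least size of a (finite) resolving set. -/
noncomputable def metricDim (G : SimpleGraph V) : ℕ :=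
  sInf {k | ∃ S : Finset V, S.card = k ∧ IsResolving G ↑S}

/-- Two vertices are mutually maximally distant. -/
def MMD (G : SimpleGraph V) (u v : V) : Prop :=
  u ≠ v ∧ (∀ w, G.Adj u w → G.dist v w ≤ G.dist u v) ∧
    (∀ w, G.Adj v w → G.dist u w ≤ G.dist u v)

/-- The strong resolving graph: edges between mutually maximally distant vertices. -/
def strongResolvingGraph (G : SimpleGraph V) : SimpleGraph V where
  Adj u v := MMD G u v
  symm := by
    constructor
    rintro u v ⟨hne, h1, h2⟩
    refine ⟨hne.symm, ?_, ?_⟩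
    · intro w hw
      rw [SimpleGraph.dist_comm (u := v) (v := u)]
      exact h2 w hw
    · intro w hw
      rw [SimpleGraph.dist_comm (u := v) (v := u)]
      exact h1 w hw
  loopless := ⟨fun v h => h.1 rfl⟩

/-- A set strongly resolving a graph. -/
def IsStrongResolving (G : SimpleGraph V) (S : Set V) : Prop :=
  ∀ u v : V, u ≠ v → ∃ w ∈ S,
    G.dist w u = G.dist w v + G.dist v u ∨ G.dist w v = G.dist w u + G.dist u v

/-- Strong metric dimension. -/
noncomputable def sdim (G : SimpleGraph V) : ℕ :=
  sInf {k | ∃ S : Finset V, S.card = k ∧ IsStrongResolving G ↑S}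

/-- An independent set of vertices. -/
def IsIndepFinset (G : SimpleGraph V) (S : Finset V) : Prop :=
  ∀ u ∈ S, ∀ v ∈ S, u ≠ v → ¬ G.Adj u v

/-- Independence number. -/
noncomputable def indepNum (G : SimpleGraph V) : ℕ :=
  sSup {k | ∃ S : Finset V, S.card = k ∧ IsIndepFinset G S}

/-- Vertices of the inclusion graph on `{1,...,n}`: nonempty proper subsets. -/
def SubVert (n : ℕ) := {A : Finset (Fin n) // A.Nonempty ∧ A ≠ Finset.univ}

/-- The inclusion graph on nonempty proper subsets of `{1,...,n}`. -/
def inclGraph (n : ℕ) : SimpleGraph (SubVert n) where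
  Adj A B := A.1 ⊂ B.1 ∨ B.1 ⊂ A.1
  symm := ⟨fun _ _ h => h.symm⟩
  loopless := ⟨fun A h => by
    rcases h with h | h <;> exact (ssubset_irrefl A.1) h⟩

/-- Complement of a vertex of the inclusion graph. -/
def complVert {n : ℕ} (A : SubVert n) : SubVert n :=
  ⟨A.1ᶜ,
    Finset.nonempty_iff_ne_empty.mpr fun h => A.2.2 (by simpa using h),
    fun h => (Finset.nonempty_iff_ne_empty.mp A.2.1) (by simpa using h)⟩

/-- Vertices of the inclusion ideal graph of a product of chain rings:
tuples in a product of chains, excluding bottom and top. -/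
def ChainVert {m : ℕ} (d : Fin m → ℕ) := {v : ∀ i, Fin (d i + 2) // v ≠ ⊥ ∧ v ≠ ⊤}

/-- The inclusion graph on a product of chains (minus bottom and top),
modelling the inclusion ideal graph of a product of principal ideal rings. -/
def chainGraph {m : ℕ} (d : Fin m → ℕ) : SimpleGraph (ChainVert d) where
  Adj I J := I.1 < J.1 ∨ J.1 < I.1
  symm := ⟨fun _ _ h => h.symm⟩
  loopless := ⟨fun I h => by rcases h with h | h <;> exact lt_irrefl _ h⟩

lemma complVert_ne_self {n : ℕ} (A : SubVert n) : complVert A ≠ A := by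
  intro h
  obtain ⟨a, ha⟩ := A.2.1
  have h2 : a ∈ A.1ᶜ := by rw [show A.1ᶜ = A.1 from congrArg Subtype.val h]; exact ha
  exact (Finset.mem_compl.mp h2) ha

lemma no_common {n : ℕ} (A C : SubVert n) (h1 : (inclGraph n).Adj A C)
    (h2 : (inclGraph n).Adj C (complVert A)) : False := by
  obtain ⟨a, ha⟩ := A.2.1
  obtain ⟨c, hc⟩ := C.2.1
  have hAc : A.1ᶜ.Nonempty := (complVert A).2.1
  have hcompl : (complVert A).1 = A.1ᶜ := rfl
  rcases h1 with h1 | h1 <;> rcases h2 with h2 | h2 <;> rw [hcompl] at h2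
  · exact (Finset.mem_compl.mp (h2.1 (h1.1 ha))) ha
  · apply C.2.2
    apply Finset.eq_univ_of_forall
    intro y
    by_cases hy : y ∈ A.1
    · exact h1.1 hy
    · exact h2.1 (Finset.mem_compl.mpr hy)
  · exact (Finset.mem_compl.mp (h2.1 hc)) (h1.1 hc)
  · obtain ⟨b, hb⟩ := hAc
    exact (Finset.mem_compl.mp hb) (h1.1 (h2.1 hb))

lemma not_adj_compl {n : ℕ} (A : SubVert n) : ¬ (inclGraph n).Adj A (complVert A) := by
  intro h
  obtain ⟨a, ha⟩ := A.2.1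
  obtain ⟨b, hb⟩ := (complVert A).2.1
  have hb' : b ∈ A.1ᶜ := hb
  rcases h with h | h
  · exact (Finset.mem_compl.mp (h.1 ha)) ha
  · exact (Finset.mem_compl.mp hb') (h.1 hb')

lemma walk_compl_three {n : ℕ} (hn : 3 ≤ n) (A : SubVert n) (hA : 2 ≤ A.1.card) :
    ∃ w : (inclGraph n).Walk A (complVert A), w.length = 3 := by
  obtain ⟨a, ha, x, hx, hax⟩ := Finset.one_lt_card.mp hA
  obtain ⟨b, hb⟩ := (complVert A).2.1
  have hb' : b ∈ A.1ᶜ := hb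
  have hbA : b ∉ A.1 := Finset.mem_compl.mp hb'
  have hne1 : ({a} : Finset (Fin n)) ≠ Finset.univ := by
    intro h
    have := congrArg Finset.card h
    simp [Finset.card_univ] at this
    omega
  have hne2 : ({a} ∪ A.1ᶜ : Finset (Fin n)) ≠ Finset.univ := by
    intro h
    have hx2 : x ∈ ({a} ∪ A.1ᶜ : Finset (Fin n)) := by rw [h]; exact Finset.mem_univ x
    simp at hx2
    rcases hx2 with h' | h'
    · exact hax h'.symm
    · exact h' hx
  have hs1 : ({a} : Finset (Fin n)) ⊂ A.1 := by
    rw [Finset.ssubset_iff_subset_ne]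
    refine ⟨Finset.singleton_subset_iff.mpr ha, ?_⟩
    intro h
    rw [← h] at hx
    exact hax (Finset.mem_singleton.mp hx).symm
  have hs2 : ({a} : Finset (Fin n)) ⊂ {a} ∪ A.1ᶜ := by
    rw [Finset.ssubset_iff_subset_ne]
    refine ⟨Finset.subset_union_left, ?_⟩
    intro h
    have hb2 : b ∈ ({a} : Finset (Fin n)) := by rw [h]; simp [hb']
    exact hbA ((Finset.mem_singleton.mp hb2) ▸ ha)
  have hs3 : A.1ᶜ ⊂ {a} ∪ A.1ᶜ := by
    rw [Finset.ssubset_iff_subset_ne]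
    refine ⟨Finset.subset_union_right, ?_⟩
    intro h
    have ha2 : a ∈ A.1ᶜ := by rw [h]; simp
    exact (Finset.mem_compl.mp ha2) ha
  exact ⟨Walk.cons (v := (⟨{a}, Finset.singleton_nonempty a, hne1⟩ : SubVert n)) (Or.inr hs1)
    (Walk.cons (v := (⟨{a} ∪ A.1ᶜ, ⟨a, by simp⟩, hne2⟩ : SubVert n)) (Or.inl hs2)
    (Walk.cons (Or.inr hs3) Walk.nil)), by rfl⟩

lemma compl_compl_vert {n : ℕ} (A : SubVert n) : complVert (complVert A) = A :=
  Subtype.ext (by simp [complVert])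

lemma walk_compl_three' {n : ℕ} (hn : 3 ≤ n) (A : SubVert n) :
    ∃ w : (inclGraph n).Walk A (complVert A), w.length = 3 := by
  by_cases hA : 2 ≤ A.1.card
  · exact walk_compl_three hn A hA
  · have hcard : A.1.card = 1 := by
      have := A.2.1.card_pos
      omega
    have hAc : 2 ≤ (complVert A).1.card := by
      show 2 ≤ A.1ᶜ.card
      rw [Finset.card_compl, hcard]
      simp
      omega
    obtain ⟨w, hw⟩ := walk_compl_three hn (complVert A) hAc
    refine ⟨(w.reverse).copy (compl_compl_vert A) rfl, ?_⟩
    rw [Walk.length_copy, Walk.length_reverse, hw]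

theorem stmt2 (n : ℕ) (hn : 3 ≤ n) (A B : SubVert n) (hAB : A ≠ B) :
    (inclGraph n).dist A B = 3 ↔ B = complVert A := by
  constructor
  · intro h3
    by_contra hBc
    by_cases hadj : (inclGraph n).Adj A B
    · rw [← SimpleGraph.dist_eq_one_iff_adj] at hadj
      omega
    · have hAB1 : A.1 ≠ B.1 := fun h => hAB (Subtype.ext h)
      by_cases hint : (A.1 ∩ B.1).Nonempty
      · have hCprop : A.1 ∩ B.1 ≠ Finset.univ := by
          intro h
          apply A.2.2
          apply Finset.eq_univ_of_forall
          intro y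
          have : y ∈ A.1 ∩ B.1 := by rw [h]; exact Finset.mem_univ y
          exact (Finset.mem_inter.mp this).1
        have h1 : (inclGraph n).Adj A ⟨A.1 ∩ B.1, hint, hCprop⟩ := by
          refine Or.inr (Finset.ssubset_iff_subset_ne.mpr ⟨Finset.inter_subset_left, ?_⟩)
          intro h
          apply hadj
          refine Or.inl (Finset.ssubset_iff_subset_ne.mpr ⟨?_, hAB1⟩)
          intro y hy
          rw [← h] at hy
          exact (Finset.mem_inter.mp hy).2
        have h2 : (inclGraph n).Adj (⟨A.1 ∩ B.1, hint, hCprop⟩ : SubVert n) B := by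
          refine Or.inl (Finset.ssubset_iff_subset_ne.mpr ⟨Finset.inter_subset_right, ?_⟩)
          intro h
          apply hadj
          refine Or.inr (Finset.ssubset_iff_subset_ne.mpr ⟨?_, fun hh => hAB1 hh.symm⟩)
          intro y hy
          rw [← h] at hy
          exact (Finset.mem_inter.mp hy).1
        have := SimpleGraph.dist_le (Walk.cons h1 (Walk.cons h2 Walk.nil))
        change (inclGraph n).dist A B ≤ 2 at this
        omega
      · rw [Finset.not_nonempty_iff_eq_empty] at hint
        by_cases huniv : A.1 ∪ B.1 = Finset.univ
        · apply hBc
          apply Subtype.ext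
          apply Finset.eq_of_subset_of_card_le
          · intro y hy
            show y ∈ A.1ᶜ
            rw [Finset.mem_compl]
            intro hyA
            have : y ∈ A.1 ∩ B.1 := Finset.mem_inter.mpr ⟨hyA, hy⟩
            simp [hint] at this
          · have hcu := Finset.card_union_le A.1 B.1
            rw [huniv, Finset.card_univ] at hcu
            show (complVert A).1.card ≤ B.1.card
            have hc : (complVert A).1 = A.1ᶜ := rfl
            rw [hc, Finset.card_compl]
            simp at hcu ⊢
            omega
        · obtain ⟨b, hb⟩ := B.2.1
          obtain ⟨a, ha⟩ := A.2.1
          have h1 : (inclGraph n).Adj A ⟨A.1 ∪ B.1, ⟨a, by simp [ha]⟩, huniv⟩ := by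
            refine Or.inl (Finset.ssubset_iff_subset_ne.mpr ⟨Finset.subset_union_left, ?_⟩)
            intro h
            have hbB : b ∈ A.1 := by rw [h]; simp [hb]
            have : b ∈ A.1 ∩ B.1 := Finset.mem_inter.mpr ⟨hbB, hb⟩
            simp [hint] at this
          have h2 : (inclGraph n).Adj (⟨A.1 ∪ B.1, ⟨a, by simp [ha]⟩, huniv⟩ : SubVert n) B := by
            refine Or.inr (Finset.ssubset_iff_subset_ne.mpr ⟨Finset.subset_union_right, ?_⟩)
            intro h
            have haB : a ∈ B.1 := by rw [h]; simp [ha]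
            have : a ∈ A.1 ∩ B.1 := Finset.mem_inter.mpr ⟨ha, haB⟩
            simp [hint] at this
          have := SimpleGraph.dist_le (Walk.cons h1 (Walk.cons h2 Walk.nil))
          change (inclGraph n).dist A B ≤ 2 at this
          omega
  · rintro rfl
    obtain ⟨w, hw⟩ := walk_compl_three' hn A
    have hle : (inclGraph n).dist A (complVert A) ≤ 3 := hw ▸ SimpleGraph.dist_le w
    have hre : (inclGraph n).Reachable A (complVert A) := ⟨w⟩
    have h0 : (inclGraph n).dist A (complVert A) ≠ 0 :=
      fun h => complVert_ne_self A ((hre.dist_eq_zero_iff).mp h).symm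
    have h1 : (inclGraph n).dist A (complVert A) ≠ 1 :=
      fun h => not_adj_compl A (SimpleGraph.dist_eq_one_iff_adj.mp h)
    have h2 : (inclGraph n).dist A (complVert A) ≠ 2 := by
      intro h2
      obtain ⟨p, hp⟩ := hre.exists_walk_length_eq_dist
      rw [h2] at hp
      have h01 : (inclGraph n).Adj A (p.getVert 1) := by
        have := p.adj_getVert_succ (show 0 < p.length by omega)
        simpa using this
      have h12 : (inclGraph n).Adj (p.getVert 1) (complVert A) := by
        have := p.adj_getVert_succ (show 1 < p.length by omega)
        rw [show 1 + 1 = p.length from by omega] at this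
        rwa [p.getVert_length] at this
      exact no_common A (p.getVert 1) h01 h12
    omega
end

section
/- For n ≥ 5, the metric dimension of the inclusion graph on nonempty proper subsets of {1,...,n} is at least n. -/
open SimpleGraph Finset

variable {V : Type*}

section InclAux

variable {n : ℕ}

instance : Fintype (SubVert n) := Subtype.fintype _
instance : DecidableEq (SubVert n) := Subtype.instDecidableEq

lemma walk2 (A B : SubVert n) (hne : A ≠ B) (hc : B.1 ≠ A.1ᶜ) :
    ∃ p : (inclGraph n).Walk A B, p.length ≤ 2 := by
  classical
  by_cases hadj : A.1 ⊂ B.1 ∨ B.1 ⊂ A.1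
  · exact ⟨SimpleGraph.Walk.cons (show (inclGraph n).Adj A B from hadj) SimpleGraph.Walk.nil, by simp⟩
  · push_neg at hadj
    obtain ⟨h1, h2⟩ := hadj
    have hvne : A.1 ≠ B.1 := fun h => hne (Subtype.ext h)
    have hns1 : ¬ A.1 ⊆ B.1 := fun h => h1 (Finset.ssubset_iff_subset_ne.mpr ⟨h, hvne⟩)
    have hns2 : ¬ B.1 ⊆ A.1 := fun h => h2 (Finset.ssubset_iff_subset_ne.mpr ⟨h, hvne.symm⟩)
    obtain ⟨x, hxA, hxB⟩ := Finset.not_subset.mp hns1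
    obtain ⟨y, hyB, hyA⟩ := Finset.not_subset.mp hns2
    by_cases hint : (A.1 ∩ B.1).Nonempty
    · have hCsubA : A.1 ∩ B.1 ⊂ A.1 := by
        refine Finset.ssubset_iff_subset_ne.mpr ⟨Finset.inter_subset_left, fun h => ?_⟩
        apply hns1
        intro z hz
        have : z ∈ A.1 ∩ B.1 := by rw [h]; exact hz
        exact (Finset.mem_inter.mp this).2
      have hCsubB : A.1 ∩ B.1 ⊂ B.1 := by
        refine Finset.ssubset_iff_subset_ne.mpr ⟨Finset.inter_subset_right, fun h => ?_⟩
        apply hns2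
        intro z hz
        have : z ∈ A.1 ∩ B.1 := by rw [h]; exact hz
        exact (Finset.mem_inter.mp this).1
      have hCne : (A.1 ∩ B.1) ≠ Finset.univ := by
        intro h
        have hsub : A.1 ∩ B.1 ⊆ A.1 := Finset.inter_subset_left
        rw [h] at hsub
        exact A.2.2 (Finset.univ_subset_iff.mp hsub)
      let C : SubVert n := ⟨A.1 ∩ B.1, hint, hCne⟩
      have hA : (inclGraph n).Adj A C := Or.inr hCsubA
      have hB : (inclGraph n).Adj C B := Or.inl hCsubB
      exact ⟨SimpleGraph.Walk.cons hA (SimpleGraph.Walk.cons hB SimpleGraph.Walk.nil), by simp⟩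
    · have hintE : A.1 ∩ B.1 = ∅ := Finset.not_nonempty_iff_eq_empty.mp hint
      have hUne : A.1 ∪ B.1 ≠ Finset.univ := by
        intro h
        apply hc
        ext z
        simp only [Finset.mem_compl]
        constructor
        · intro hz hzA
          have : z ∈ A.1 ∩ B.1 := Finset.mem_inter.mpr ⟨hzA, hz⟩
          rw [hintE] at this
          exact absurd this (Finset.notMem_empty z)
        · intro hz
          have hzu : z ∈ A.1 ∪ B.1 := by rw [h]; exact Finset.mem_univ z
          rcases Finset.mem_union.mp hzu with h' | h'
          · exact absurd h' hz
          · exact h'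
      have hAsub : A.1 ⊂ A.1 ∪ B.1 := by
        refine Finset.ssubset_iff_subset_ne.mpr ⟨Finset.subset_union_left, fun h => ?_⟩
        exact hyA (by rw [h]; exact Finset.mem_union_right _ hyB)
      have hBsub : B.1 ⊂ A.1 ∪ B.1 := by
        refine Finset.ssubset_iff_subset_ne.mpr ⟨Finset.subset_union_right, fun h => ?_⟩
        exact hxB (by rw [h]; exact Finset.mem_union_left _ hxA)
      let C : SubVert n := ⟨A.1 ∪ B.1, A.2.1.mono Finset.subset_union_left, hUne⟩
      have hA : (inclGraph n).Adj A C := Or.inl hAsub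
      have hB : (inclGraph n).Adj C B := Or.inr hBsub
      exact ⟨SimpleGraph.Walk.cons hA (SimpleGraph.Walk.cons hB SimpleGraph.Walk.nil), by simp⟩

lemma dist_mem (A B : SubVert n) (hne : A ≠ B) (hc : B.1 ≠ A.1ᶜ) :
    1 ≤ (inclGraph n).dist A B ∧ (inclGraph n).dist A B ≤ 2 := by
  obtain ⟨p, hp⟩ := walk2 A B hne hc
  have hr : (inclGraph n).Reachable A B := ⟨p⟩
  exact ⟨hr.pos_dist_of_ne hne, le_trans (SimpleGraph.dist_le p) hp⟩

lemma reach (hn : 3 ≤ n) (A B : SubVert n) : (inclGraph n).Reachable A B := by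
  classical
  by_cases hne : A = B
  · exact hne ▸ SimpleGraph.Reachable.refl A
  by_cases hc : B.1 = A.1ᶜ
  · obtain ⟨x, hx⟩ := A.2.1
    obtain ⟨y, hy⟩ := B.2.1
    have hyA : y ∉ A.1 := by rw [hc] at hy; simpa using hy
    have hCne : ({x, y} : Finset (Fin n)) ≠ Finset.univ := by
      intro h
      have h1 : ({x, y} : Finset (Fin n)).card ≤ 2 :=
        le_trans (Finset.card_insert_le _ _) (by simp)
      rw [h, Finset.card_univ, Fintype.card_fin] at h1
      omega
    let C : SubVert n := ⟨{x, y}, ⟨x, by simp⟩, hCne⟩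
    have r1 : (inclGraph n).Reachable A C := by
      by_cases hAC : A = C
      · exact hAC ▸ SimpleGraph.Reachable.refl A
      obtain ⟨p, _⟩ := walk2 A C hAC (by
        intro h
        have hx2 : x ∈ C.1 := by simp [C]
        rw [h] at hx2
        simp at hx2
        exact hx2 hx)
      exact ⟨p⟩
    have r2 : (inclGraph n).Reachable C B := by
      have hCB : C ≠ B := by
        intro h
        have hx2 : x ∈ C.1 := by simp [C]
        rw [h, hc] at hx2
        simp at hx2
        exact hx2 hx
      obtain ⟨p, _⟩ := walk2 C B hCB (by
        intro h
        rw [h] at hy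
        simp [C] at hy)
      exact ⟨p⟩
    exact r1.trans r2
  · obtain ⟨p, _⟩ := walk2 A B hne hc
    exact ⟨p⟩

lemma card_subvert (hn : 1 ≤ n) : Fintype.card (SubVert n) = 2 ^ n - 2 := by
  classical
  have hne : Nonempty (Fin n) := ⟨⟨0, hn⟩⟩
  have e : Fintype.card (SubVert n)
      = (Finset.univ.filter (fun A : Finset (Fin n) => A.Nonempty ∧ A ≠ Finset.univ)).card :=
    Fintype.card_subtype _
  rw [e]
  have hfe : Finset.univ.filter (fun A : Finset (Fin n) => A.Nonempty ∧ A ≠ Finset.univ)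
      = Finset.univ \ {∅, Finset.univ} := by
    ext A
    simp [Finset.nonempty_iff_ne_empty]
  rw [hfe, Finset.card_sdiff_of_subset (Finset.subset_univ _), Finset.card_univ, Fintype.card_finset,
    Fintype.card_fin]
  have h2 : ({∅, Finset.univ} : Finset (Finset (Fin n))).card = 2 := by
    rw [Finset.card_insert_of_notMem, Finset.card_singleton]
    simp only [Finset.mem_singleton]
    exact fun h => (Finset.univ_nonempty.ne_empty h.symm)
  rw [h2]

lemma resolving_univ (hn : 3 ≤ n) :
    IsResolving (inclGraph n) ↑(Finset.univ : Finset (SubVert n)) := by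
  intro u v h
  have h0 := h u (by simp)
  rw [SimpleGraph.dist_self] at h0
  exact (((reach hn v u).dist_eq_zero_iff).mp h0.symm).symm

lemma two_mul_lt (m : ℕ) (hm : 5 ≤ m) : 2 * m < 2 ^ (m - 1) := by
  induction m, hm using Nat.le_induction with
  | base => norm_num
  | succ m hm ih =>
    have h1 : m + 1 - 1 = (m - 1) + 1 := by omega
    rw [h1, pow_succ]
    omega

end InclAux

theorem stmt6 (n : ℕ) (hn : 5 ≤ n) : n ≤ metricDim (inclGraph n) := by
  classical
  have hmem : (Finset.univ : Finset (SubVert n)).card ∈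
      {k | ∃ S : Finset (SubVert n), S.card = k ∧ IsResolving (inclGraph n) ↑S} :=
    ⟨Finset.univ, rfl, resolving_univ (by omega)⟩
  have hnonempty : {k | ∃ S : Finset (SubVert n), S.card = k ∧
      IsResolving (inclGraph n) ↑S}.Nonempty := ⟨_, hmem⟩
  obtain ⟨S, hScard, hS⟩ := Nat.sInf_mem hnonempty
  rw [metricDim, ← hScard]
  by_contra hcon
  push_neg at hcon
  -- hcon : S.card < n
  have hdist : ∀ u : SubVert n, u ∉ S → complVert u ∉ S → ∀ w ∈ S,
      1 ≤ (inclGraph n).dist u w ∧ (inclGraph n).dist u w ≤ 2 := by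
    intro u hu hcu w hw
    refine dist_mem u w (fun h => hu (h ▸ hw)) (fun h => hcu ?_)
    have : w = complVert u := Subtype.ext h
    rw [← this]; exact hw
  set U := Finset.univ \ S with hU
  set T1 := U.filter (fun u => complVert u ∈ S) with hT1
  set T2 := U.filter (fun u => ¬ complVert u ∈ S) with hT2
  have hT1card : T1.card ≤ S.card := by
    apply Finset.card_le_card_of_injOn complVert
    · intro u hu
      exact (Finset.mem_filter.mp hu).2
    · intro u _ v _ h
      have h' : u.1ᶜ = v.1ᶜ := congrArg Subtype.val h
      exact Subtype.ext (compl_injective h')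
  have hT2card : T2.card ≤ 2 ^ S.card := by
    have key : T2.card ≤ S.powerset.card := by
      apply Finset.card_le_card_of_injOn (fun u => S.filter (fun w => (inclGraph n).dist u w = 1))
      · intro u _
        exact Finset.mem_powerset.mpr (Finset.filter_subset _ _)
      · intro u hu v hv heq
        rw [Finset.mem_coe, hT2, Finset.mem_filter, Finset.mem_sdiff] at hu hv
        apply hS u v
        intro w hw
        have d1 := hdist u hu.1.2 hu.2 w hw
        have d2 := hdist v hv.1.2 hv.2 w hw
        have hiff := Finset.ext_iff.mp heq w
        rw [Finset.mem_filter, Finset.mem_filter] at hiff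
        have hiff2 : (inclGraph n).dist u w = 1 ↔ (inclGraph n).dist v w = 1 :=
          ⟨fun h => (hiff.mp ⟨hw, h⟩).2, fun h => (hiff.mpr ⟨hw, h⟩).2⟩
        omega
    rwa [Finset.card_powerset] at key
  have hsplit : T1.card + T2.card = U.card :=
    Finset.card_filter_add_card_filter_not _
  have hUcard : U.card = Fintype.card (SubVert n) - S.card := by
    rw [hU, Finset.card_sdiff_of_subset (Finset.subset_univ S), Finset.card_univ]
  have hVcard : Fintype.card (SubVert n) = 2 ^ n - 2 := card_subvert (by omega)
  have hp1 : 2 * 2 ^ (n - 1) = 2 ^ n := by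
    rw [← pow_succ']
    congr 1
    omega
  have hp2 : 2 ^ S.card ≤ 2 ^ (n - 1) := Nat.pow_le_pow_right (by norm_num) (by omega)
  have hp3 : 2 * n < 2 ^ (n - 1) := two_mul_lt n hn
  omega
end

section
/- For n ≥ 3, the independence number of the strong resolving graph of the inclusion graph on nonempty proper subsets of {1,...,n} equals 2n − 3. -/
open SimpleGraph Finset

variable {V : Type*}

namespace Stmt11Aux

variable {n : ℕ}

lemma subvert_ne_of_not_subset {A B : SubVert n} (h : ¬ A.1 ⊆ B.1) : A ≠ B := by
  intro he; exact h (he ▸ subset_rfl)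

lemma exists_common {A B : SubVert n} (h1 : ¬ A.1 ⊆ B.1) (h2 : ¬ B.1 ⊆ A.1)
    (hc : B.1 ≠ A.1ᶜ) : ∃ C : SubVert n, (inclGraph n).Adj A C ∧ (inclGraph n).Adj C B := by
  by_cases hi : (A.1 ∩ B.1).Nonempty
  · refine ⟨⟨A.1 ∩ B.1, hi, fun h => A.2.2 (Finset.univ_subset_iff.mp (by
      have hs : A.1 ∩ B.1 ⊆ A.1 := Finset.inter_subset_left
      rw [h] at hs; exact hs))⟩, Or.inr ?_, Or.inl ?_⟩
    · exact Finset.ssubset_iff_subset_ne.mpr ⟨Finset.inter_subset_left,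
        fun h => h1 (Finset.inter_eq_left.mp h)⟩
    · exact Finset.ssubset_iff_subset_ne.mpr ⟨Finset.inter_subset_right,
        fun h => h2 (Finset.inter_eq_right.mp h)⟩
  · rw [Finset.not_nonempty_iff_eq_empty] at hi
    have hj : A.1 ∪ B.1 ≠ Finset.univ := by
      intro hu
      apply hc
      ext x
      simp only [Finset.mem_compl]
      constructor
      · intro hxB hxA
        have : x ∈ A.1 ∩ B.1 := Finset.mem_inter.mpr ⟨hxA, hxB⟩
        simp [hi] at this
      · intro hxA
        have : x ∈ A.1 ∪ B.1 := by rw [hu]; exact Finset.mem_univ x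
        rcases Finset.mem_union.mp this with h | h
        · exact absurd h hxA
        · exact h
    refine ⟨⟨A.1 ∪ B.1, A.2.1.mono Finset.subset_union_left, hj⟩, Or.inl ?_, Or.inr ?_⟩
    · exact Finset.ssubset_iff_subset_ne.mpr ⟨Finset.subset_union_left,
        fun h => h2 (Finset.union_eq_left.mp h.symm)⟩
    · exact Finset.ssubset_iff_subset_ne.mpr ⟨Finset.subset_union_right,
        fun h => h1 (Finset.union_eq_right.mp h.symm)⟩

lemma dist_eq_two {A B : SubVert n} (h1 : ¬ A.1 ⊆ B.1) (h2 : ¬ B.1 ⊆ A.1)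
    (hc : B.1 ≠ A.1ᶜ) : (inclGraph n).dist A B = 2 := by
  obtain ⟨C, hAC, hCB⟩ := exists_common h1 h2 hc
  let hw : (inclGraph n).Walk A B := .cons hAC (.cons hCB .nil)
  have hle : (inclGraph n).dist A B ≤ 2 := by
    simpa [hw] using SimpleGraph.dist_le hw
  have hne0 : (inclGraph n).dist A B ≠ 0 := by
    rw [SimpleGraph.dist_ne_zero_iff_ne_and_reachable]
    exact ⟨subvert_ne_of_not_subset h1, hw.reachable⟩
  have hne1 : (inclGraph n).dist A B ≠ 1 := by
    rw [Ne, SimpleGraph.dist_eq_one_iff_adj]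
    rintro (h | h)
    exacts [h1 h.1, h2 h.1]
  omega

lemma compl_not_subset (A : SubVert n) : ¬ A.1 ⊆ A.1ᶜ := by
  obtain ⟨a, ha⟩ := A.2.1
  intro h
  exact (Finset.mem_compl.mp (h ha)) ha

lemma compl_not_subset' (A : SubVert n) : ¬ A.1ᶜ ⊆ A.1 := by
  obtain ⟨a, ha⟩ := (complVert A).2.1
  intro h
  exact (Finset.mem_compl.mp ha) (h ha)

lemma ne_complVert (A : SubVert n) : A ≠ complVert A := by
  intro h
  exact compl_not_subset A (le_of_eq (congrArg Subtype.val h))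

lemma no_common_compl (A : SubVert n) (C : SubVert n) (h1 : (inclGraph n).Adj A C)
    (h2 : (inclGraph n).Adj C (complVert A)) : False := by
  rcases h1 with h1 | h1 <;> rcases h2 with h2 | h2
  · -- A ⊂ C, C ⊂ Aᶜ
    obtain ⟨a, ha⟩ := A.2.1
    exact Finset.mem_compl.mp (h2.1 (h1.1 ha)) ha
  · -- A ⊂ C, Aᶜ ⊂ C : C = univ
    apply C.2.2
    ext x
    simp only [Finset.mem_univ, iff_true]
    by_cases hx : x ∈ A.1
    · exact h1.1 hx
    · exact h2.1 (Finset.mem_compl.mpr hx)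
  · -- C ⊂ A, C ⊂ Aᶜ
    obtain ⟨c, hc⟩ := C.2.1
    exact Finset.mem_compl.mp (h2.1 hc) (h1.1 hc)
  · -- C ⊂ A, Aᶜ ⊂ C
    obtain ⟨a, ha⟩ := (complVert A).2.1
    exact Finset.mem_compl.mp ha (h1.1 (h2.1 ha))

lemma dist_compl_aux {A : SubVert n} (hA : 2 ≤ A.1.card) :
    (inclGraph n).dist A (complVert A) = 3 := by
  obtain ⟨a, ha⟩ := A.2.1
  obtain ⟨c, hc⟩ := (complVert A).2.1
  have hcA : c ∉ A.1 := Finset.mem_compl.mp hc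
  -- second element of A
  obtain ⟨b, hb, hba⟩ : ∃ b ∈ A.1, b ≠ a := by
    obtain ⟨x, hx, y, hy, hxy⟩ := Finset.one_lt_card.mp hA
    by_cases hxa : x = a
    · exact ⟨y, hy, fun h => hxy (by rw [hxa, h])⟩
    · exact ⟨x, hx, hxa⟩
  -- vertices {a} and insert a Aᶜ
  have hS1 : ({a} : Finset (Fin n)) ≠ Finset.univ := by
    intro h
    have : b ∈ ({a} : Finset (Fin n)) := by rw [h]; exact Finset.mem_univ b
    exact hba (Finset.mem_singleton.mp this)
  have hS2 : insert a A.1ᶜ ≠ Finset.univ := by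
    intro h
    have : b ∈ insert a A.1ᶜ := by rw [h]; exact Finset.mem_univ b
    rcases Finset.mem_insert.mp this with h' | h'
    · exact hba h'
    · exact Finset.mem_compl.mp h' hb
  let S1 : SubVert n := ⟨{a}, Finset.singleton_nonempty a, hS1⟩
  let S2 : SubVert n := ⟨insert a A.1ᶜ, Finset.insert_nonempty _ _, hS2⟩
  have adj1 : (inclGraph n).Adj A S1 := by
    refine Or.inr (Finset.ssubset_iff_subset_ne.mpr ⟨Finset.singleton_subset_iff.mpr ha, ?_⟩)
    intro h
    have h' : ({a} : Finset (Fin n)) = A.1 := h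
    rw [← h'] at hb
    exact hba (Finset.mem_singleton.mp hb)
  have adj2 : (inclGraph n).Adj S1 S2 := by
    refine Or.inl (Finset.ssubset_iff_subset_ne.mpr
      ⟨Finset.singleton_subset_iff.mpr (Finset.mem_insert_self a _), ?_⟩)
    intro h
    have h' : ({a} : Finset (Fin n)) = insert a A.1ᶜ := h
    have hc' : c ∈ A.1ᶜ := hc
    have : c ∈ ({a} : Finset (Fin n)) := by
      rw [h']; exact Finset.mem_insert_of_mem hc'
    rw [Finset.mem_singleton] at this
    rw [this] at hcA
    exact hcA ha
  have adj3 : (inclGraph n).Adj S2 (complVert A) := by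
    refine Or.inr (Finset.ssubset_iff_subset_ne.mpr ⟨Finset.subset_insert a _, ?_⟩)
    intro h
    have h' : A.1ᶜ = insert a A.1ᶜ := h
    have : a ∈ A.1ᶜ := by rw [h']; exact Finset.mem_insert_self a _
    exact Finset.mem_compl.mp this ha
  let hw : (inclGraph n).Walk A (complVert A) := .cons adj1 (.cons adj2 (.cons adj3 .nil))
  have hle : (inclGraph n).dist A (complVert A) ≤ 3 := by
    simpa [hw] using SimpleGraph.dist_le hw
  have hne0 : (inclGraph n).dist A (complVert A) ≠ 0 := by
    rw [SimpleGraph.dist_ne_zero_iff_ne_and_reachable]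
    exact ⟨ne_complVert A, hw.reachable⟩
  have hne1 : (inclGraph n).dist A (complVert A) ≠ 1 := by
    rw [Ne, SimpleGraph.dist_eq_one_iff_adj]
    rintro (h | h)
    exacts [compl_not_subset A h.1, compl_not_subset' A h.1]
  have hne2 : (inclGraph n).dist A (complVert A) ≠ 2 := by
    intro h2
    obtain ⟨p, hp⟩ := SimpleGraph.exists_walk_of_dist_ne_zero hne0
    rw [h2] at hp
    have g1 : (inclGraph n).Adj (p.getVert 0) (p.getVert 1) :=
      p.adj_getVert_succ (by omega)
    have g2 : (inclGraph n).Adj (p.getVert 1) (p.getVert 2) :=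
      p.adj_getVert_succ (by omega)
    rw [p.getVert_zero] at g1
    have : p.getVert 2 = complVert A := by
      have := p.getVert_length
      rwa [hp] at this
    rw [this] at g2
    exact no_common_compl A _ g1 g2
  omega

lemma complVert_complVert (A : SubVert n) : complVert (complVert A) = A :=
  Subtype.ext (compl_compl A.1)

lemma dist_compl (hn : 3 ≤ n) (A : SubVert n) :
    (inclGraph n).dist A (complVert A) = 3 := by
  have hcards : A.1.card + A.1ᶜ.card = n := by
    simpa using Finset.card_add_card_compl A.1
  by_cases hA : 2 ≤ A.1.card
  · exact dist_compl_aux hA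
  · have h2 : 2 ≤ A.1ᶜ.card := by omega
    have := dist_compl_aux (A := complVert A) h2
    rw [complVert_complVert] at this
    rw [SimpleGraph.dist_comm]
    exact this

lemma dist_le_two' {A B : SubVert n} (hc : B.1 ≠ A.1ᶜ) : (inclGraph n).dist A B ≤ 2 := by
  by_cases h1 : A.1 ⊆ B.1
  · by_cases he : A.1 = B.1
    · have : A = B := Subtype.ext he
      rw [this, SimpleGraph.dist_self]; omega
    · have : (inclGraph n).dist A B = 1 := SimpleGraph.dist_eq_one_iff_adj.mpr
        (Or.inl (Finset.ssubset_iff_subset_ne.mpr ⟨h1, he⟩))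
      omega
  · by_cases h2 : B.1 ⊆ A.1
    · have : (inclGraph n).dist A B = 1 := SimpleGraph.dist_eq_one_iff_adj.mpr
        (Or.inr (Finset.ssubset_iff_subset_ne.mpr ⟨h2, fun he => h1 (le_of_eq he.symm)⟩))
      omega
    · exact le_of_eq (dist_eq_two h1 h2 hc)

lemma mmd_compl (hn : 3 ≤ n) (A : SubVert n) : MMD (inclGraph n) A (complVert A) := by
  refine ⟨ne_complVert A, ?_, ?_⟩
  · intro w hw
    rw [dist_compl hn A]
    have hne : w.1 ≠ (complVert A).1ᶜ := by
      have : (complVert A).1ᶜ = A.1 := compl_compl A.1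
      rw [this]
      intro he
      exact (inclGraph n).ne_of_adj ((inclGraph n).adj_symm hw) (Subtype.ext he)
    calc (inclGraph n).dist (complVert A) w ≤ 2 := dist_le_two' hne
    _ ≤ 3 := by omega
  · intro w hw
    rw [dist_compl hn A]
    have hne : w.1 ≠ A.1ᶜ := by
      intro he
      exact (inclGraph n).ne_of_adj ((inclGraph n).adj_symm hw) (Subtype.ext he)
    calc (inclGraph n).dist A w ≤ 2 := dist_le_two' hne
    _ ≤ 3 := by omega

lemma mem_of_union_eq_univ {X Y : Finset (Fin n)} (h : X ∪ Y = Finset.univ) {x : Fin n}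
    (hx : x ∉ X) : x ∈ Y := by
  have : x ∈ X ∪ Y := by rw [h]; exact Finset.mem_univ x
  rcases Finset.mem_union.mp this with h' | h'
  · exact absurd h' hx
  · exact h'

lemma mmd_of_incomp {A B : SubVert n} (h1 : ¬ A.1 ⊆ B.1) (h2 : ¬ B.1 ⊆ A.1)
    (hm : (A.1 ∩ B.1).Nonempty) (hj : A.1 ∪ B.1 ≠ Finset.univ) :
    MMD (inclGraph n) A B := by
  have hc : B.1 ≠ A.1ᶜ := by
    intro h
    apply hj
    rw [h]
    simp
  have hd : (inclGraph n).dist A B = 2 := dist_eq_two h1 h2 hc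
  refine ⟨subvert_ne_of_not_subset h1, ?_, ?_⟩
  · intro w hw
    rw [hd]
    apply dist_le_two' (A := B)
    intro he
    rcases hw with hw | hw
    · -- A ⊂ w = Bᶜ : A ∩ B = ∅
      obtain ⟨x, hx⟩ := hm
      have hxA : x ∈ A.1 := (Finset.mem_inter.mp hx).1
      have hxB : x ∈ B.1 := (Finset.mem_inter.mp hx).2
      have : x ∈ B.1ᶜ := by rw [← he]; exact hw.1 hxA
      exact Finset.mem_compl.mp this hxB
    · -- w = Bᶜ ⊂ A : A ∪ B = univ
      apply hj
      apply Finset.univ_subset_iff.mp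
      intro x _
      by_cases hxB : x ∈ B.1
      · exact Finset.mem_union.mpr (Or.inr hxB)
      · have : x ∈ w.1 := by rw [he]; exact Finset.mem_compl.mpr hxB
        exact Finset.mem_union.mpr (Or.inl (hw.1 this))
  · intro w hw
    rw [hd]
    apply dist_le_two' (A := A)
    intro he
    rcases hw with hw | hw
    · -- B ⊂ w = Aᶜ : A ∩ B = ∅
      obtain ⟨x, hx⟩ := hm
      have hxA : x ∈ A.1 := (Finset.mem_inter.mp hx).1
      have hxB : x ∈ B.1 := (Finset.mem_inter.mp hx).2
      have : x ∈ A.1ᶜ := by rw [← he]; exact hw.1 hxB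
      exact Finset.mem_compl.mp this hxA
    · -- w = Aᶜ ⊂ B : A ∪ B = univ
      apply hj
      apply Finset.univ_subset_iff.mp
      intro x _
      by_cases hxA : x ∈ A.1
      · exact Finset.mem_union.mpr (Or.inl hxA)
      · have : x ∈ w.1 := by rw [he]; exact Finset.mem_compl.mpr hxA
        exact Finset.mem_union.mpr (Or.inr (hw.1 this))

lemma dist_ge_two {A B : SubVert n} (hn : 3 ≤ n) (h1 : ¬ A.1 ⊆ B.1) (h2 : ¬ B.1 ⊆ A.1) :
    2 ≤ (inclGraph n).dist A B := by
  by_cases hc : B.1 ≠ A.1ᶜ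
  · rw [dist_eq_two h1 h2 hc]
  · push_neg at hc
    have : B = complVert A := Subtype.ext hc
    rw [this, dist_compl hn A]
    omega

lemma not_mmd_of_lt (hn : 3 ≤ n) {A B : SubVert n} (h : A.1 ⊂ B.1) :
    ¬ MMD (inclGraph n) A B := by
  rintro ⟨hne, -, h2⟩
  obtain ⟨a, ha⟩ := A.2.1
  obtain ⟨b, hbB, hbA⟩ := Finset.exists_of_ssubset h
  have haB : a ∈ B.1 := h.1 ha
  have hbne : b ≠ a := fun he => hbA (he ▸ ha)
  set W : SubVert n := ⟨B.1.erase a, ⟨b, Finset.mem_erase.mpr ⟨hbne, hbB⟩⟩, by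
    intro hu
    have : a ∈ B.1.erase a := by rw [hu]; exact Finset.mem_univ a
    exact Finset.notMem_erase a B.1 this⟩ with hW
  have hadjW : (inclGraph n).Adj B W := Or.inr (by
    show B.1.erase a ⊂ B.1
    exact Finset.erase_ssubset haB)
  have hle := h2 W hadjW
  have hdAB : (inclGraph n).dist A B = 1 :=
    SimpleGraph.dist_eq_one_iff_adj.mpr (Or.inl h)
  have hAW : ¬ A.1 ⊆ W.1 := by
    intro hs
    have : a ∈ B.1.erase a := hs ha
    exact Finset.notMem_erase a B.1 this
  have hWA : ¬ W.1 ⊆ A.1 := by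
    intro hs
    exact hbA (hs (Finset.mem_erase.mpr ⟨hbne, hbB⟩))
  have := dist_ge_two hn hAW hWA
  omega

lemma not_mmd_of_disjoint (hn : 3 ≤ n) {A B : SubVert n} (hd : A.1 ∩ B.1 = ∅)
    (hc : B.1 ≠ A.1ᶜ) : ¬ MMD (inclGraph n) A B := by
  rintro ⟨hne, hcond, -⟩
  have h1 : ¬ A.1 ⊆ B.1 := by
    intro hs
    obtain ⟨a, ha⟩ := A.2.1
    have : a ∈ A.1 ∩ B.1 := Finset.mem_inter.mpr ⟨ha, hs ha⟩
    simp [hd] at this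
  have h2 : ¬ B.1 ⊆ A.1 := by
    intro hs
    obtain ⟨b, hb⟩ := B.2.1
    have : b ∈ A.1 ∩ B.1 := Finset.mem_inter.mpr ⟨hs hb, hb⟩
    simp [hd] at this
  have hAsub : A.1 ⊆ B.1ᶜ := by
    intro x hx
    refine Finset.mem_compl.mpr fun hxB => ?_
    have : x ∈ A.1 ∩ B.1 := Finset.mem_inter.mpr ⟨hx, hxB⟩
    simp [hd] at this
  have hAne : A.1 ≠ B.1ᶜ := by
    intro he
    exact hc (by rw [he, compl_compl])
  have hadj : (inclGraph n).Adj A (complVert B) :=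
    Or.inl (Finset.ssubset_iff_subset_ne.mpr ⟨hAsub, hAne⟩)
  have hle := hcond (complVert B) hadj
  rw [dist_compl hn B, dist_eq_two h1 h2 hc] at hle
  omega

lemma not_mmd_of_codisjoint (hn : 3 ≤ n) {A B : SubVert n} (hd : A.1 ∪ B.1 = Finset.univ)
    (hc : B.1 ≠ A.1ᶜ) : ¬ MMD (inclGraph n) A B := by
  rintro ⟨hne, hcond, -⟩
  have h1 : ¬ A.1 ⊆ B.1 := by
    intro hs
    apply B.2.2
    apply Finset.univ_subset_iff.mp
    have : A.1 ∪ B.1 ⊆ B.1 := Finset.union_subset hs subset_rfl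
    rw [hd] at this
    exact this
  have h2 : ¬ B.1 ⊆ A.1 := by
    intro hs
    apply A.2.2
    apply Finset.univ_subset_iff.mp
    have : A.1 ∪ B.1 ⊆ A.1 := Finset.union_subset subset_rfl hs
    rw [hd] at this
    exact this
  have hsub : B.1ᶜ ⊆ A.1 := by
    intro x hx
    exact mem_of_union_eq_univ (by rw [Finset.union_comm]; exact hd) (Finset.mem_compl.mp hx)
  have hBne : B.1ᶜ ≠ A.1 := by
    intro he
    exact hc (by rw [← he, compl_compl])
  have hadj : (inclGraph n).Adj A (complVert B) :=
    Or.inr (Finset.ssubset_iff_subset_ne.mpr ⟨hsub, hBne⟩)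
  have hle := hcond (complVert B) hadj
  rw [dist_compl hn B, dist_eq_two h1 h2 hc] at hle
  omega

lemma laminar_card {α : Type*} [DecidableEq α] (N : ℕ) :
    ∀ (S : Finset α) (F : Finset (Finset α)), S.card + F.card ≤ N →
      (∀ A ∈ F, A.Nonempty) → (∀ A ∈ F, A ⊆ S) →
      (∀ A ∈ F, ∀ B ∈ F, A ⊆ B ∨ B ⊆ A ∨ A ∩ B = ∅) →
      F.card ≤ 2 * S.card - 1 ∧ (S ∉ F → F.card ≤ 2 * S.card - 2) := by
  induction N with
  | zero =>
    intro S F hle hne hsub hlam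
    have : F.card = 0 := by omega
    constructor <;> intros <;> omega
  | succ N ih =>
    intro S F hle hne hsub hlam
    rcases Finset.eq_empty_or_nonempty F with rfl | hFne
    · simp
    by_cases hSF : S ∈ F
    · have hcard : 1 ≤ S.card := Finset.card_pos.mpr (hne S hSF)
      have hFcard : F.card = (F.erase S).card + 1 := by
        rw [Finset.card_erase_of_mem hSF]
        have : 1 ≤ F.card := Finset.card_pos.mpr hFne
        omega
      have herase := ih S (F.erase S) (by omega)
        (fun A hA => hne A (Finset.mem_of_mem_erase hA))
        (fun A hA => hsub A (Finset.mem_of_mem_erase hA))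
        (fun A hA B hB => hlam A (Finset.mem_of_mem_erase hA) B (Finset.mem_of_mem_erase hB))
      have h2 := herase.2 (Finset.notMem_erase S F)
      constructor
      · omega
      · intro h; exact absurd hSF h
    · obtain ⟨M, hMF, hMmax⟩ : ∃ M ∈ F, ∀ A ∈ F, ¬ M ⊂ A := by
        obtain ⟨M, hM⟩ := F.exists_maximal hFne
        exact ⟨M, hM.1, fun A hA hlt => hlt.2 (hM.2 hA hlt.1)⟩
      have hMne : M.Nonempty := hne M hMF
      have hMS : M ⊆ S := hsub M hMF
      have hMcard : 1 ≤ M.card := Finset.card_pos.mpr hMne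
      have hMlt : M.card < S.card := by
        apply Finset.card_lt_card
        exact Finset.ssubset_iff_subset_ne.mpr ⟨hMS, fun h => hSF (h ▸ hMF)⟩
      set F1 := F.filter (fun A => A ⊆ M) with hF1
      set F2 := F.filter (fun A => ¬ A ⊆ M) with hF2
      have hsplit : F1.card + F2.card = F.card := Finset.card_filter_add_card_filter_not _
      have hF2disj : ∀ A ∈ F2, A ⊆ S \ M := by
        intro A hA
        rw [hF2, Finset.mem_filter] at hA
        obtain ⟨hAF, hAM⟩ := hA
        have hAMdisj : A ∩ M = ∅ := by
          rcases hlam A hAF M hMF with h | h | h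
          · exact absurd h hAM
          · by_cases he : M = A
            · exact absurd (le_of_eq he.symm) hAM
            · exact absurd (Finset.ssubset_iff_subset_ne.mpr ⟨h, he⟩) (hMmax A hAF)
          · exact h
        intro x hx
        rw [Finset.mem_sdiff]
        refine ⟨hsub A hAF hx, fun hxM => ?_⟩
        have : x ∈ A ∩ M := Finset.mem_inter.mpr ⟨hx, hxM⟩
        simp [hAMdisj] at this
      have hsd : (S \ M).card = S.card - M.card := Finset.card_sdiff_of_subset hMS
      have hF1card : F1.card ≤ F.card := Finset.card_filter_le _ _
      have hF2card : F2.card ≤ F.card := Finset.card_filter_le _ _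
      have ih1 := ih M F1 (by omega)
        (fun A hA => hne A (Finset.mem_of_mem_filter A hA))
        (fun A hA => (Finset.mem_filter.mp hA).2)
        (fun A hA B hB => hlam A (Finset.mem_of_mem_filter A hA) B (Finset.mem_of_mem_filter B hB))
      have ih2 := ih (S \ M) F2 (by omega)
        (fun A hA => hne A (Finset.mem_of_mem_filter A hA))
        hF2disj
        (fun A hA B hB => hlam A (Finset.mem_of_mem_filter A hA) B (Finset.mem_of_mem_filter B hB))
      have b1 := ih1.1
      have b2 := ih2.1
      omega

/-- Pair relation: comparable, disjoint, or covering. -/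
def Rel (X Y : Finset (Fin n)) : Prop :=
  X ⊆ Y ∨ Y ⊆ X ∨ X ∩ Y = ∅ ∨ X ∪ Y = Finset.univ

lemma rel_compl_left {X Y : Finset (Fin n)} : Rel Xᶜ Y ↔ Rel X Y := by
  have hc1 : Xᶜ ⊆ Y ↔ X ∪ Y = Finset.univ := by
    simp only [Finset.subset_iff, Finset.eq_univ_iff_forall, Finset.mem_compl, Finset.mem_union]
    exact forall_congr' fun x => by tauto
  have hc2 : Y ⊆ Xᶜ ↔ X ∩ Y = ∅ := by
    simp only [Finset.subset_iff, Finset.eq_empty_iff_forall_notMem, Finset.mem_compl,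
      Finset.mem_inter]
    exact forall_congr' fun x => by tauto
  have hc3 : Xᶜ ∩ Y = ∅ ↔ Y ⊆ X := by
    simp only [Finset.subset_iff, Finset.eq_empty_iff_forall_notMem, Finset.mem_compl,
      Finset.mem_inter]
    exact forall_congr' fun x => by tauto
  have hc4 : Xᶜ ∪ Y = Finset.univ ↔ X ⊆ Y := by
    simp only [Finset.subset_iff, Finset.eq_univ_iff_forall, Finset.mem_compl, Finset.mem_union]
    exact forall_congr' fun x => by tauto
  unfold Rel
  rw [hc1, hc2, hc3, hc4]
  tauto

lemma rel_comm {X Y : Finset (Fin n)} : Rel X Y ↔ Rel Y X := by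
  unfold Rel
  rw [Finset.inter_comm, Finset.union_comm]
  tauto

lemma rel_compl_right {X Y : Finset (Fin n)} : Rel X Yᶜ ↔ Rel X Y := by
  rw [rel_comm, rel_compl_left, rel_comm]

lemma indep_card_le (hn : 3 ≤ n) (S : Finset (SubVert n))
    (hS : IsIndepFinset (strongResolvingGraph (inclGraph n)) S) : S.card ≤ 2 * n - 3 := by
  have hnpos : 0 < n := by omega
  set e : Fin n := ⟨n - 1, by omega⟩ with he
  set f : SubVert n → Finset (Fin n) := fun A => if e ∈ A.1 then A.1ᶜ else A.1 with hf
  -- non-adjacency consequences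
  have hnc : ∀ A ∈ S, ∀ B ∈ S, A ≠ B → B.1 ≠ A.1ᶜ ∧ Rel A.1 B.1 := by
    intro A hA B hB hne
    have hnadj : ¬ MMD (inclGraph n) A B := hS A hA B hB hne
    constructor
    · intro hc
      exact hnadj (by
        have : B = complVert A := Subtype.ext hc
        rw [this]
        exact mmd_compl hn A)
    · by_contra hR
      unfold Rel at hR
      push_neg at hR
      obtain ⟨h1, h2, h3, h4⟩ := hR
      exact hnadj (mmd_of_incomp h1 h2 h3 h4)
  -- f is injective on S
  have hinj : Set.InjOn f S := by
    intro A hA B hB hfe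
    by_contra hne
    obtain ⟨hc, -⟩ := hnc A hA B hB hne
    obtain ⟨hc', -⟩ := hnc B hB A hA (fun h => hne h.symm)
    simp only [hf] at hfe
    by_cases heA : e ∈ A.1 <;> by_cases heB : e ∈ B.1 <;>
      simp only [heA, heB, if_pos, if_neg, if_true, if_false] at hfe
    · exact hne (Subtype.ext (compl_injective hfe))
    · exact hc' (by rw [← hfe, compl_compl])
    · exact hc (by rw [hfe, compl_compl])
    · exact hne (Subtype.ext hfe)
  have hcard : (S.image f).card = S.card := Finset.card_image_of_injOn hinj
  -- the image is a laminar family on univ.erase e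
  have hmem : ∀ X ∈ S.image f, X.Nonempty ∧ X ⊆ Finset.univ.erase e := by
    intro X hX
    obtain ⟨A, hA, rfl⟩ := Finset.mem_image.mp hX
    simp only [hf]
    by_cases heA : e ∈ A.1
    · rw [if_pos heA]
      refine ⟨(complVert A).2.1, fun x hx => ?_⟩
      refine Finset.mem_erase.mpr ⟨fun hxe => ?_, Finset.mem_univ x⟩
      rw [hxe] at hx
      exact Finset.mem_compl.mp hx heA
    · rw [if_neg heA]
      refine ⟨A.2.1, fun x hx => ?_⟩
      refine Finset.mem_erase.mpr ⟨fun hxe => heA (hxe ▸ hx), Finset.mem_univ x⟩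
  have hlam : ∀ X ∈ S.image f, ∀ Y ∈ S.image f, X ⊆ Y ∨ Y ⊆ X ∨ X ∩ Y = ∅ := by
    intro X hX Y hY
    obtain ⟨A, hA, rfl⟩ := Finset.mem_image.mp hX
    obtain ⟨B, hB, rfl⟩ := Finset.mem_image.mp hY
    by_cases hAB : A = B
    · subst hAB; exact Or.inl subset_rfl
    have hrel : Rel A.1 B.1 := (hnc A hA B hB hAB).2
    have hrelf : Rel (f A) (f B) := by
      simp only [hf]
      by_cases heA : e ∈ A.1 <;> by_cases heB : e ∈ B.1 <;>
        simp only [heA, heB, if_pos, if_neg, if_true, if_false]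
      · exact rel_compl_left.mpr (rel_compl_right.mpr hrel)
      · exact rel_compl_left.mpr hrel
      · exact rel_compl_right.mpr hrel
      · exact hrel
    have hju : f A ∪ f B ≠ Finset.univ := by
      intro hu
      have : e ∈ f A ∪ f B := by rw [hu]; exact Finset.mem_univ e
      rcases Finset.mem_union.mp this with h | h
      · exact Finset.notMem_erase e _ ((hmem _ hX).2 h)
      · exact Finset.notMem_erase e _ ((hmem _ hY).2 h)
    unfold Rel at hrelf
    tauto
  -- apply the laminar bound
  have hbound := (laminar_card ((Finset.univ.erase e).card + (S.image f).card)
    (Finset.univ.erase e) (S.image f) le_rfl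
    (fun X hX => (hmem X hX).1) (fun X hX => (hmem X hX).2) hlam).1
  have hecard : (Finset.univ.erase e).card = n - 1 := by
    rw [Finset.card_erase_of_mem (Finset.mem_univ e)]
    simp [Fintype.card_fin]
  rw [hecard, hcard] at hbound
  omega

noncomputable instance : DecidableEq (SubVert n) := Classical.decEq _

def chainSet (n k : ℕ) : Finset (Fin n) := Finset.univ.filter (fun i => i.val < k)

lemma mem_chainSet {k : ℕ} {i : Fin n} : i ∈ chainSet n k ↔ i.val < k := by
  simp [chainSet]

def Vc (hn : 3 ≤ n) (k : ℕ) : SubVert n :=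
  ⟨chainSet n (max 1 (min k (n - 1))),
    ⟨⟨0, by omega⟩, mem_chainSet.mpr (show (0:ℕ) < _ by omega)⟩,
    fun h => by
      have : (⟨n - 1, by omega⟩ : Fin n) ∈ chainSet n (max 1 (min k (n - 1))) := by
        rw [h]; exact Finset.mem_univ _
      rw [mem_chainSet] at this
      have h2 : n - 1 < max 1 (min k (n - 1)) := this
      omega⟩

def Vs (hn : 3 ≤ n) (i : ℕ) : SubVert n :=
  ⟨{⟨i % n, Nat.mod_lt _ (by omega)⟩}, Finset.singleton_nonempty _,
    fun h => by
      have h0 : (⟨0, by omega⟩ : Fin n) ∈ ({⟨i % n, Nat.mod_lt _ (by omega)⟩} : Finset (Fin n)) := by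
        rw [h]; exact Finset.mem_univ _
      have h1 : (⟨1, by omega⟩ : Fin n) ∈ ({⟨i % n, Nat.mod_lt _ (by omega)⟩} : Finset (Fin n)) := by
        rw [h]; exact Finset.mem_univ _
      rw [Finset.mem_singleton] at h0 h1
      have h01 := h0.trans h1.symm
      simp [Fin.ext_iff] at h01⟩

lemma Vc_val (hn : 3 ≤ n) {k : ℕ} (hk1 : 1 ≤ k) (hk2 : k ≤ n - 1) :
    (Vc hn k).1 = chainSet n k := by
  show chainSet n (max 1 (min k (n - 1))) = chainSet n k
  congr 1
  omega

lemma mem_Vs_iff (hn : 3 ≤ n) {i : ℕ} {x : Fin n} : x ∈ (Vs hn i).1 ↔ x.val = i % n := by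
  rw [Vs]
  simp [Fin.ext_iff]

lemma indep_big (hn : 3 ≤ n) :
    ∃ T : Finset (SubVert n), T.card = 2 * n - 3 ∧
      IsIndepFinset (strongResolvingGraph (inclGraph n)) T := by
  set T : Finset (SubVert n) :=
    ((Finset.Icc 1 (n - 1)).image (Vc hn)) ∪ ((Finset.Icc 1 (n - 2)).image (Vs hn)) with hT
  have memT : ∀ u, u ∈ T ↔
      (∃ k, (1 ≤ k ∧ k ≤ n - 1) ∧ Vc hn k = u) ∨
      (∃ i, (1 ≤ i ∧ i ≤ n - 2) ∧ Vs hn i = u) := by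
    intro u
    simp [hT, Finset.mem_union, Finset.mem_image, Finset.mem_Icc]
  -- disjointness of the pieces
  have hVcVs : ∀ k i : ℕ, 1 ≤ k → k ≤ n - 1 → 1 ≤ i → i ≤ n - 2 → Vc hn k ≠ Vs hn i := by
    intro k i hk1 hk2 hi1 hi2 h
    have h0 : (⟨0, by omega⟩ : Fin n) ∈ (Vc hn k).1 := by
      rw [Vc_val hn hk1 hk2, mem_chainSet]; exact (show (0:ℕ) < k by omega)
    rw [h, mem_Vs_iff hn] at h0
    have h3 : 0 = i % n := h0
    rw [Nat.mod_eq_of_lt (by omega)] at h3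
    omega
  -- independence
  have hindep : IsIndepFinset (strongResolvingGraph (inclGraph n)) T := by
    have symmNot : ∀ u v : SubVert n, ¬ MMD (inclGraph n) u v →
        ¬ (strongResolvingGraph (inclGraph n)).Adj v u :=
      fun u v h h' => h ((strongResolvingGraph (inclGraph n)).adj_symm h')
    -- chain-chain
    have hcc : ∀ k k' : ℕ, 1 ≤ k → k ≤ n - 1 → 1 ≤ k' → k' ≤ n - 1 → k < k' →
        ¬ MMD (inclGraph n) (Vc hn k) (Vc hn k') := by
      intro k k' hk1 hk2 hk1' hk2' hlt
      apply not_mmd_of_lt hn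
      rw [Vc_val hn hk1 hk2, Vc_val hn hk1' hk2']
      refine Finset.ssubset_iff_subset_ne.mpr ⟨?_, ?_⟩
      · intro x hx
        rw [mem_chainSet] at *
        omega
      · intro h
        have : (⟨k, by omega⟩ : Fin n) ∈ chainSet n k' := mem_chainSet.mpr (show k < k' by omega)
        rw [← h, mem_chainSet] at this
        have h2 : k < k := this
        omega
    -- singleton-singleton
    have hss : ∀ i j : ℕ, 1 ≤ i → i ≤ n - 2 → 1 ≤ j → j ≤ n - 2 → i ≠ j →
        ¬ MMD (inclGraph n) (Vs hn i) (Vs hn j) := by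
      intro i j hi1 hi2 hj1 hj2 hij
      apply not_mmd_of_disjoint hn
      · apply Finset.eq_empty_iff_forall_notMem.mpr
        intro x hx
        rw [Finset.mem_inter, mem_Vs_iff hn, mem_Vs_iff hn] at hx
        obtain ⟨ha, hb⟩ := hx
        rw [ha] at hb
        rw [Nat.mod_eq_of_lt (by omega), Nat.mod_eq_of_lt (by omega)] at hb
        exact hij hb
      · intro h
        have hx : (⟨n - 1, by omega⟩ : Fin n) ∈ (Vs hn i).1ᶜ := by
          rw [Finset.mem_compl, mem_Vs_iff hn]
          intro hv
          have h3 : n - 1 = i % n := hv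
          rw [Nat.mod_eq_of_lt (by omega)] at h3
          omega
        rw [← h, mem_Vs_iff hn] at hx
        have h4 : n - 1 = j % n := hx
        rw [Nat.mod_eq_of_lt (by omega)] at h4
        omega
    -- chain-singleton
    have hcs : ∀ k i : ℕ, 1 ≤ k → k ≤ n - 1 → 1 ≤ i → i ≤ n - 2 →
        ¬ MMD (inclGraph n) (Vc hn k) (Vs hn i) := by
      intro k i hk1 hk2 hi1 hi2
      by_cases hik : i < k
      · -- Vs i ⊂ Vc k
        intro h
        apply not_mmd_of_lt hn (A := Vs hn i) (B := Vc hn k) ?_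
          ((strongResolvingGraph (inclGraph n)).adj_symm h)
        rw [Vc_val hn hk1 hk2]
        refine Finset.ssubset_iff_subset_ne.mpr ⟨?_, ?_⟩
        · intro x hx
          rw [mem_Vs_iff hn] at hx
          rw [mem_chainSet]
          rw [Nat.mod_eq_of_lt (by omega)] at hx
          omega
        · intro h'
          have : (⟨0, by omega⟩ : Fin n) ∈ chainSet n k := mem_chainSet.mpr (show (0:ℕ) < k by omega)
          rw [← h', mem_Vs_iff hn] at this
          have h3 : 0 = i % n := this
          rw [Nat.mod_eq_of_lt (by omega)] at h3
          omega
      · -- disjoint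
        apply not_mmd_of_disjoint hn
        · apply Finset.eq_empty_iff_forall_notMem.mpr
          intro x hx
          rw [Finset.mem_inter, Vc_val hn hk1 hk2, mem_chainSet, mem_Vs_iff hn] at hx
          obtain ⟨ha, hb⟩ := hx
          rw [Nat.mod_eq_of_lt (by omega)] at hb
          omega
        · intro h
          have : (⟨n - 1, by omega⟩ : Fin n) ∈ (Vc hn k).1ᶜ := by
            rw [Finset.mem_compl, Vc_val hn hk1 hk2, mem_chainSet]
            exact (show ¬ (n - 1 < k) by omega)
          rw [← h, mem_Vs_iff hn] at this
          have h3 : n - 1 = i % n := this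
          rw [Nat.mod_eq_of_lt (by omega)] at h3
          omega
    intro u hu v hv huv
    rw [memT] at hu hv
    rcases hu with ⟨k, ⟨hk1, hk2⟩, rfl⟩ | ⟨i, ⟨hi1, hi2⟩, rfl⟩ <;>
      rcases hv with ⟨k', ⟨hk1', hk2'⟩, rfl⟩ | ⟨j, ⟨hj1, hj2⟩, rfl⟩
    · rcases lt_trichotomy k k' with h | h | h
      · exact hcc k k' hk1 hk2 hk1' hk2' h
      · exact absurd (by rw [h]) huv
      · exact symmNot _ _ (hcc k' k hk1' hk2' hk1 hk2 h)
    · exact hcs k j hk1 hk2 hj1 hj2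
    · exact symmNot _ _ (hcs k' i hk1' hk2' hi1 hi2)
    · have hij : i ≠ j := fun h => huv (by rw [h])
      exact hss i j hi1 hi2 hj1 hj2 hij
  -- cardinality
  have hdisj : Disjoint ((Finset.Icc 1 (n - 1)).image (Vc hn))
      ((Finset.Icc 1 (n - 2)).image (Vs hn)) := by
    rw [Finset.disjoint_left]
    intro u hu hv
    obtain ⟨k, hk, rfl⟩ := Finset.mem_image.mp hu
    obtain ⟨i, hi, hie⟩ := Finset.mem_image.mp hv
    rw [Finset.mem_Icc] at hk hi
    exact hVcVs k i (by omega) (by omega) (by omega) (by omega) hie.symm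
  have hc1 : ((Finset.Icc 1 (n - 1)).image (Vc hn)).card = n - 1 := by
    rw [Finset.card_image_of_injOn, Nat.card_Icc]
    · omega
    · intro k hk k' hk' he
      rw [Finset.mem_coe, Finset.mem_Icc] at hk hk'
      by_contra hne
      have hv := congrArg Subtype.val he
      rcases Nat.lt_or_ge k k' with h | h
      · have : (⟨k, by omega⟩ : Fin n) ∈ (Vc hn k').1 := by
          rw [Vc_val hn hk'.1 hk'.2, mem_chainSet]; exact h
        rw [← he, Vc_val hn hk.1 hk.2, mem_chainSet] at this
        have h2 : k < k := this
        omega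
      · have h' : k' < k := by omega
        have : (⟨k', by omega⟩ : Fin n) ∈ (Vc hn k).1 := by
          rw [Vc_val hn hk.1 hk.2, mem_chainSet]; exact h'
        rw [he, Vc_val hn hk'.1 hk'.2, mem_chainSet] at this
        have h2 : k' < k' := this
        omega
  have hc2 : ((Finset.Icc 1 (n - 2)).image (Vs hn)).card = n - 2 := by
    rw [Finset.card_image_of_injOn, Nat.card_Icc]
    · omega
    · intro i hi j hj he
      rw [Finset.mem_coe, Finset.mem_Icc] at hi hj
      have : (⟨i % n, Nat.mod_lt _ (by omega)⟩ : Fin n) ∈ (Vs hn j).1 := by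
        rw [← he, mem_Vs_iff hn]
      rw [mem_Vs_iff hn] at this
      simp only at this
      rw [Nat.mod_eq_of_lt (by omega), Nat.mod_eq_of_lt (by omega)] at this
      exact this
  refine ⟨T, ?_, hindep⟩
  rw [hT, Finset.card_union_of_disjoint hdisj, hc1, hc2]
  omega

end Stmt11Aux


theorem stmt11 (n : ℕ) (hn : 3 ≤ n) :
    _root_.indepNum (strongResolvingGraph (inclGraph n)) = 2 * n - 3 := by
  obtain ⟨T, hTcard, hTindep⟩ := Stmt11Aux.indep_big hn
  have hub : ∀ k ∈ {k | ∃ S : Finset (SubVert n), S.card = k ∧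
      IsIndepFinset (strongResolvingGraph (inclGraph n)) S}, k ≤ 2 * n - 3 := by
    rintro k ⟨S, rfl, hS⟩
    exact Stmt11Aux.indep_card_le hn S hS
  apply le_antisymm
  · exact csSup_le ⟨T.card, T, rfl, hTindep⟩ hub
  · exact le_csSup ⟨2 * n - 3, hub⟩ ⟨T, hTcard, hTindep⟩
end

section
/- Let G be the inclusion graph whose vertices are the nontrivial order ideals of P = C_1 × ⋯ × C_m (where each C_i is a finite chain of length n_i + 1, i.e., the ideal lattice of a principal ideal ring with n_i nontrivial ideals), with adjacency given by proper inclusion, m ≥ 2. Then for vertices I, J, the distance d(I,J) = 3 if and only if I and J both have every coordinate equal to the top or bottom of its chain, and J is the 'complement' of I (J_i is top iff I_i is bottom). -/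
open SimpleGraph Finset

variable {V : Type*}

section aux

variable {m : ℕ} {d : Fin m → ℕ}

lemma chain_adj_iff {I J : ChainVert d} :
    (chainGraph d).Adj I J ↔ (I.1 < J.1 ∨ J.1 < I.1) := Iff.rfl

lemma chain_bot_ne_top (i : Fin m) : (⊥ : Fin (d i + 2)) ≠ ⊤ := by
  intro h
  have h2 := congrArg Fin.val h
  rw [show ((⊥ : Fin (d i + 2)) : ℕ) = 0 from rfl, Fin.top_eq_last, Fin.val_last] at h2
  omega

/-- If two vertices have a common neighbor, their distance is at most 2. -/
lemma chain_dist_le_two {I J K : ChainVert d} (h1 : (chainGraph d).Adj I K)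
    (h2 : (chainGraph d).Adj K J) : (chainGraph d).dist I J ≤ 2 := by
  have := SimpleGraph.dist_le (SimpleGraph.Walk.cons h1 (SimpleGraph.Walk.cons h2 SimpleGraph.Walk.nil))
  simpa using this

end aux


/-- Decompose a walk of length 2 into a common neighbor. -/
lemma walk_len2 {G : SimpleGraph V} {u v : V} (p : G.Walk u v) (hp : p.length = 2) :
    ∃ w, G.Adj u w ∧ G.Adj w v := by
  cases p with
  | nil => simp at hp
  | cons ha q =>
    cases q with
    | nil => simp at hp
    | cons hb r =>
      cases r with
      | nil => exact ⟨_, ha, hb⟩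
      | cons hc s => simp at hp

theorem stmt13 (m : ℕ) (hm : 2 ≤ m) (d : Fin m → ℕ) (hd : ∀ i, 1 ≤ d i)
    (I J : ChainVert d) :
    (chainGraph d).dist I J = 3 ↔
      ((∀ i, I.1 i = ⊥ ∨ I.1 i = ⊤) ∧ (∀ i, J.1 i = ⊥ ∨ J.1 i = ⊤) ∧
        ∀ i, (J.1 i = ⊤ ↔ I.1 i = ⊥)) := by
  have hbt : ∀ i, (⊥ : Fin (d i + 2)) ≠ ⊤ := fun i => chain_bot_ne_top i
  constructor
  · intro h3
    have hne : I ≠ J := by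
      rintro rfl; rw [SimpleGraph.dist_self] at h3; omega
    have hnadj : ¬ (chainGraph d).Adj I J := by
      intro h; rw [← SimpleGraph.dist_eq_one_iff_adj] at h; omega
    have hnIJ : ¬ I.1 < J.1 := fun h => hnadj (Or.inl h)
    have hnJI : ¬ J.1 < I.1 := fun h => hnadj (Or.inr h)
    have hne1 : I.1 ≠ J.1 := fun h => hne (Subtype.ext h)
    -- the meet is ⊥
    have hmeet : I.1 ⊓ J.1 = ⊥ := by
      by_contra hK
      have hKI : I.1 ⊓ J.1 ≤ I.1 := inf_le_left
      have hKJ : I.1 ⊓ J.1 ≤ J.1 := inf_le_right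
      have hKI' : I.1 ⊓ J.1 ≠ I.1 := by
        intro h
        exact hnIJ (lt_of_le_of_ne ((le_of_eq h.symm).trans hKJ) hne1)
      have hKJ' : I.1 ⊓ J.1 ≠ J.1 := by
        intro h
        exact hnJI (lt_of_le_of_ne ((le_of_eq h.symm).trans hKI) (Ne.symm hne1))
      have hKtop : I.1 ⊓ J.1 ≠ ⊤ := by
        intro h
        have : I.1 ≤ I.1 ⊓ J.1 := (le_top : I.1 ≤ ⊤).trans (le_of_eq h.symm)
        exact hKI' (le_antisymm hKI this)
      set K : ChainVert d := ⟨I.1 ⊓ J.1, hK, hKtop⟩ with hKdef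
      have hadj1 : (chainGraph d).Adj I K := Or.inr (lt_of_le_of_ne hKI hKI')
      have hadj2 : (chainGraph d).Adj K J := Or.inl (lt_of_le_of_ne hKJ hKJ')
      have := chain_dist_le_two hadj1 hadj2
      omega
    -- the join is ⊤
    have hjoin : I.1 ⊔ J.1 = ⊤ := by
      by_contra hK
      have hKI : I.1 ≤ I.1 ⊔ J.1 := le_sup_left
      have hKJ : J.1 ≤ I.1 ⊔ J.1 := le_sup_right
      have hKI' : I.1 ⊔ J.1 ≠ I.1 := by
        intro h
        exact hnJI (lt_of_le_of_ne (hKJ.trans (le_of_eq h)) (Ne.symm hne1))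
      have hKJ' : I.1 ⊔ J.1 ≠ J.1 := by
        intro h
        exact hnIJ (lt_of_le_of_ne (hKI.trans (le_of_eq h)) hne1)
      have hKbot : I.1 ⊔ J.1 ≠ ⊥ := by
        intro h
        exact I.2.1 (le_bot_iff.mp (hKI.trans (le_of_eq h)))
      set K : ChainVert d := ⟨I.1 ⊔ J.1, hKbot, hK⟩ with hKdef
      have hadj1 : (chainGraph d).Adj I K := Or.inl (lt_of_le_of_ne hKI (fun h => hKI' h.symm))
      have hadj2 : (chainGraph d).Adj K J := Or.inr (lt_of_le_of_ne hKJ (fun h => hKJ' h.symm))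
      have := chain_dist_le_two hadj1 hadj2
      omega
    -- coordinatewise analysis
    have hco : ∀ i, (I.1 i = ⊥ ∧ J.1 i = ⊤) ∨ (I.1 i = ⊤ ∧ J.1 i = ⊥) := by
      intro i
      have h1 : I.1 i ⊓ J.1 i = ⊥ := congrFun hmeet i
      have h2 : I.1 i ⊔ J.1 i = ⊤ := congrFun hjoin i
      rw [min_eq_bot] at h1
      rw [max_eq_top] at h2
      rcases h1 with h1 | h1 <;> rcases h2 with h2 | h2
      · exact absurd (h1 ▸ h2) (hbt i)
      · exact Or.inl ⟨h1, h2⟩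
      · exact Or.inr ⟨h2, h1⟩
      · exact absurd (h1 ▸ h2) (hbt i)
    refine ⟨fun i => ?_, fun i => ?_, fun i => ?_⟩
    · rcases hco i with ⟨h, _⟩ | ⟨h, _⟩ <;> simp [h]
    · rcases hco i with ⟨_, h⟩ | ⟨_, h⟩ <;> simp [h]
    · rcases hco i with ⟨h1, h2⟩ | ⟨h1, h2⟩
      · simp [h1, h2]
      · simp [h1, h2, hbt i, (hbt i).symm]
  · rintro ⟨h1, h2, h3⟩
    have hIi : ∀ i, I.1 i = ⊤ → J.1 i = ⊥ := by
      intro i hi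
      rcases h2 i with h | h
      · exact h
      · exfalso
        have := (h3 i).mp h
        rw [hi] at this
        exact hbt i this.symm
    have hJi : ∀ i, J.1 i = ⊤ → I.1 i = ⊥ := fun i hi => (h3 i).mp hi
    obtain ⟨i0, hi0⟩ : ∃ i, I.1 i = ⊤ := by
      by_contra hc
      push_neg at hc
      exact I.2.1 (funext fun i => (h1 i).resolve_right (hc i))
    obtain ⟨i1, hi1⟩ : ∃ i, J.1 i = ⊤ := by
      by_contra hc
      push_neg at hc
      exact J.2.1 (funext fun i => (h2 i).resolve_right (hc i))
    have hJi0 : J.1 i0 = ⊥ := hIi i0 hi0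
    have hIi1 : I.1 i1 = ⊥ := hJi i1 hi1
    have hne01 : i1 ≠ i0 := by
      intro h; rw [h, hi0] at hIi1; exact hbt i0 hIi1.symm
    have hne1 : I.1 ≠ J.1 := by
      intro h
      rw [h, hJi0] at hi0
      exact hbt i0 hi0
    have hne : I ≠ J := fun h => hne1 (congrArg Subtype.val h)
    have hnadj : ¬ (chainGraph d).Adj I J := by
      rintro (h | h)
      · have := h.le i0
        rw [hi0, hJi0] at this
        exact hbt i0 (le_antisymm bot_le this)
      · have := h.le i1
        rw [hi1, hIi1] at this
        exact hbt i1 (le_antisymm bot_le this)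
    have hmeet : I.1 ⊓ J.1 = ⊥ := by
      funext i
      show I.1 i ⊓ J.1 i = ⊥
      rcases h1 i with h | h
      · rw [h]; exact bot_inf_eq _
      · rw [h, hIi i h]; exact inf_bot_eq _
    have hjoin : I.1 ⊔ J.1 = ⊤ := by
      funext i
      show I.1 i ⊔ J.1 i = ⊤
      rcases h1 i with h | h
      · rw [h, (h3 i).mpr h]; exact sup_top_eq _
      · rw [h]; exact top_sup_eq _
    -- the middle element 1 of chain i0
    have hone_bot : (⊥ : Fin (d i0 + 2)) < 1 := by
      rw [Fin.lt_def]
      have hb : ((⊥ : Fin (d i0 + 2)) : ℕ) = 0 := rfl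
      rw [hb, Fin.val_one]
      omega
    have hone_top : (1 : Fin (d i0 + 2)) < ⊤ := by
      rw [Fin.lt_def, Fin.top_eq_last, Fin.val_one, Fin.val_last]
      have := hd i0
      omega
    -- vertex A : 1 at i0, ⊥ elsewhere
    classical
    set a : ∀ i, Fin (d i + 2) := Function.update ⊥ i0 1 with ha_def
    have haA : a i0 = 1 := Function.update_self _ _ _
    have haA' : ∀ i, i ≠ i0 → a i = ⊥ := fun i hi => Function.update_of_ne hi _ _
    have hAbot : a ≠ ⊥ := by
      intro h
      have h' : a i0 = ⊥ := congrFun h i0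
      rw [haA] at h'
      exact (ne_of_lt hone_bot) h'.symm
    have hAtop : a ≠ ⊤ := by
      intro h
      have h' : a i0 = ⊤ := congrFun h i0
      rw [haA] at h'
      exact (ne_of_lt hone_top) h'
    -- vertex C : 1 at i0, J elsewhere
    set c : ∀ i, Fin (d i + 2) := Function.update J.1 i0 1 with hc_def
    have hcC : c i0 = 1 := Function.update_self _ _ _
    have hcC' : ∀ i, i ≠ i0 → c i = J.1 i := fun i hi => Function.update_of_ne hi _ _
    have hCbot : c ≠ ⊥ := by
      intro h
      have h' : c i1 = ⊥ := congrFun h i1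
      rw [hcC' i1 hne01, hi1] at h'
      exact hbt i1 h'.symm
    have hCtop : c ≠ ⊤ := by
      intro h
      have h' : c i0 = ⊤ := congrFun h i0
      rw [hcC] at h'
      exact (ne_of_lt hone_top) h'
    -- strict inequalities
    have haI : a < I.1 := by
      refine lt_of_le_of_ne ?_ ?_
      · intro i
        by_cases h : i = i0
        · subst h
          rw [haA, hi0]
          exact le_top
        · rw [haA' i h]
          exact bot_le
      · intro h
        have h' : a i0 = I.1 i0 := congrFun h i0
        rw [haA, hi0] at h'
        exact (ne_of_lt hone_top) h'
    have hac : a < c := by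
      refine lt_of_le_of_ne ?_ ?_
      · intro i
        by_cases h : i = i0
        · subst h
          rw [haA, hcC]
        · rw [haA' i h]
          exact bot_le
      · intro h
        have h' : a i1 = c i1 := congrFun h i1
        rw [haA' i1 hne01, hcC' i1 hne01, hi1] at h'
        exact hbt i1 h'
    have hJc : J.1 < c := by
      refine lt_of_le_of_ne ?_ ?_
      · intro i
        by_cases h : i = i0
        · subst h
          rw [hJi0, hcC]
          exact bot_le
        · rw [hcC' i h]
      · intro h
        have h' : J.1 i0 = c i0 := congrFun h i0
        rw [hJi0, hcC] at h'
        exact (ne_of_lt hone_bot) h'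
    have hIA : (chainGraph d).Adj I ⟨a, hAbot, hAtop⟩ := Or.inr haI
    have hAC : (chainGraph d).Adj (⟨a, hAbot, hAtop⟩ : ChainVert d) ⟨c, hCbot, hCtop⟩ := Or.inl hac
    have hCJ : (chainGraph d).Adj (⟨c, hCbot, hCtop⟩ : ChainVert d) J := Or.inr hJc
    -- distance at most 3
    have hle3 : (chainGraph d).dist I J ≤ 3 := by
      have := SimpleGraph.dist_le
        (SimpleGraph.Walk.cons hIA (SimpleGraph.Walk.cons hAC
          (SimpleGraph.Walk.cons hCJ SimpleGraph.Walk.nil)))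
      exact this
    have hne0 : (chainGraph d).dist I J ≠ 0 := by
      rw [SimpleGraph.dist_ne_zero_iff_ne_and_reachable]
      exact ⟨hne, ⟨SimpleGraph.Walk.cons hIA (SimpleGraph.Walk.cons hAC
        (SimpleGraph.Walk.cons hCJ SimpleGraph.Walk.nil))⟩⟩
    have hned1 : (chainGraph d).dist I J ≠ 1 := by
      intro h
      exact hnadj (SimpleGraph.dist_eq_one_iff_adj.mp h)
    have hne2 : (chainGraph d).dist I J ≠ 2 := by
      intro h2'
      obtain ⟨p, hp⟩ := SimpleGraph.exists_walk_of_dist_ne_zero hne0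
      rw [h2'] at hp
      obtain ⟨K, hKa, hKb⟩ := walk_len2 p hp
      rcases hKa with hKa | hKa <;> rcases hKb with hKb | hKb
      · exact hnadj (Or.inl (hKa.trans hKb))
      · exact K.2.2 (top_le_iff.mp (le_trans (le_of_eq hjoin.symm) (sup_le hKa.le hKb.le)))
      · exact K.2.1 (le_bot_iff.mp (le_trans (le_inf hKa.le hKb.le) (le_of_eq hmeet)))
      · exact hnadj (Or.inr (hKb.trans hKa))
    omega
end

section
/- Let R ≅ R_1 × F where R_1 is a principal ideal ring (not a field) with n_1 nontrivial ideals forming a chain and F is a field. Then the metric dimension of the inclusion ideal graph In(R) equals n_1. -/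
open SimpleGraph Finset

variable {V : Type*}

-- ===== auxiliary machinery for stmt15 =====
section Stmt15Aux

open SimpleGraph Finset

/-- separation lemma: cut/point structure bounds distinguishable elements -/
lemma key_sep {W : Type*} {N : ℕ} (f : W → Fin N → ℕ) :
    ∀ (S : Finset W), ∀ (T : Finset (Fin N)),
    (∀ w ∈ S, (∃ a : ℕ, ∀ c c' : Fin N, f w c = f w c' ↔ ((a ≤ c.val) ↔ (a ≤ c'.val))) ∨
      (∃ a : Fin N, ∀ c c' : Fin N, f w c = f w c' ↔ (c = a ↔ c' = a))) →
    (∀ c ∈ T, ∀ c' ∈ T, (∀ w ∈ S, f w c = f w c') → c = c') →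
    T.card ≤ S.card + 1 := by
  classical
  intro S
  induction S using Finset.strongInduction with
  | _ S IH =>
    intro T hstruct hsep
    by_cases hP : ∃ w ∈ S, ∃ a : Fin N, ∀ c c' : Fin N, f w c = f w c' ↔ (c = a ↔ c' = a)
    · obtain ⟨w, hw, a, hpt⟩ := hP
      have hsub : S.erase w ⊂ S := Finset.erase_ssubset hw
      have h1 : (T.erase a).card ≤ (S.erase w).card + 1 := by
        refine IH _ hsub _ (fun w' hw' => hstruct w' (Finset.mem_of_mem_erase hw')) ?_
        intro c hc c' hc' hf
        refine hsep c (Finset.mem_of_mem_erase hc) c' (Finset.mem_of_mem_erase hc') ?_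
        intro w'' hw''
        by_cases hww : w'' = w
        · subst hww
          exact (hpt c c').mpr (by
            simp [Finset.ne_of_mem_erase hc, Finset.ne_of_mem_erase hc'])
        · exact hf w'' (Finset.mem_erase.2 ⟨hww, hw''⟩)
      have h2 : T.card ≤ (T.erase a).card + 1 := by
        calc T.card ≤ (insert a (T.erase a)).card :=
              Finset.card_le_card (Finset.subset_insert_iff.mpr (le_refl _))
          _ ≤ (T.erase a).card + 1 := Finset.card_insert_le _ _
      have h3 : (S.erase w).card = S.card - 1 := Finset.card_erase_of_mem hw
      have h4 : 1 ≤ S.card := Finset.card_pos.mpr ⟨w, hw⟩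
      omega
    · have hcut : ∀ w ∈ S, ∃ a : ℕ, ∀ c c' : Fin N,
          f w c = f w c' ↔ ((a ≤ c.val) ↔ (a ≤ c'.val)) := by
        intro w hw
        rcases hstruct w hw with h | ⟨a, ha⟩
        · exact h
        · exact absurd ⟨w, hw, a, ha⟩ hP
      rcases S.eq_empty_or_nonempty with rfl | hSne
      · have : T.card ≤ 1 := by
          refine Finset.card_le_one.2 (fun c hc c' hc' => hsep c hc c' hc' ?_)
          intro w hw; exact absurd hw (Finset.notMem_empty w)
        omega
      · set δ : W → ℕ := fun w => if h : ∃ a : ℕ, ∀ c c' : Fin N,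
            f w c = f w c' ↔ ((a ≤ c.val) ↔ (a ≤ c'.val)) then h.choose else 0 with hδ
        have hδspec : ∀ w ∈ S, ∀ c c' : Fin N,
            f w c = f w c' ↔ ((δ w ≤ c.val) ↔ (δ w ≤ c'.val)) := by
          intro w hw
          have h := hcut w hw
          simp only [hδ, dif_pos h]
          exact h.choose_spec
        obtain ⟨w₀, hw₀, hmax⟩ := S.exists_max_image δ hSne
        have hsub : S.erase w₀ ⊂ S := Finset.erase_ssubset hw₀
        set T₀ := T.filter (fun c => ¬ δ w₀ ≤ c.val) with hT₀
        set T₁ := T.filter (fun c => δ w₀ ≤ c.val) with hT₁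
        have hT1 : T₁.card ≤ 1 := by
          refine Finset.card_le_one.2 (fun c hc c' hc' => ?_)
          rw [hT₁, Finset.mem_filter] at hc hc'
          refine hsep c hc.1 c' hc'.1 ?_
          intro w hw
          refine (hδspec w hw c c').mpr ?_
          have := hmax w hw
          have h1 := hc.2
          have h2 := hc'.2
          constructor <;> intro <;> omega
        have hT0 : T₀.card ≤ (S.erase w₀).card + 1 := by
          refine IH _ hsub _ (fun w' hw' => hstruct w' (Finset.mem_of_mem_erase hw')) ?_
          intro c hc c' hc' hf
          rw [hT₀, Finset.mem_filter] at hc hc'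
          refine hsep c hc.1 c' hc'.1 ?_
          intro w hw
          by_cases hww : w = w₀
          · subst hww
            refine (hδspec w hw c c').mpr ?_
            have h1 := hc.2
            have h2 := hc'.2
            constructor <;> intro h <;> [exact absurd h h1; exact absurd h h2]
          · exact hf w (Finset.mem_erase.2 ⟨hww, hw⟩)
        have hsum : T₁.card + T₀.card = T.card := by
          rw [hT₀, hT₁]
          exact Finset.card_filter_add_card_filter_not (s := T)
            (p := fun c : Fin N => δ w₀ ≤ c.val)
        have h3 : (S.erase w₀).card = S.card - 1 := Finset.card_erase_of_mem hw₀
        have h4 : 1 ≤ S.card := Finset.card_pos.mpr ⟨w₀, hw₀⟩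
        omega

/-- iff helper for "point" structure -/
lemma iff_point {α : Type*} [DecidableEq α] (g : α → ℕ) (a : α) (x y : ℕ) (hxy : x ≠ y)
    (hg : ∀ c, g c = if c = a then x else y) :
    ∀ c c', g c = g c' ↔ (c = a ↔ c' = a) := by
  classical
  intro c c'
  rw [hg, hg]
  by_cases hc : c = a <;> by_cases hc' : c' = a <;> simp [hc, hc', hxy, hxy.symm]

/-- iff helper for "cut" structure -/
lemma iff_cut {N : ℕ} (g : Fin N → ℕ) (a : ℕ) (x y : ℕ) (hxy : x ≠ y)
    (hg : ∀ c, g c = if a ≤ c.val then x else y) :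
    ∀ c c', g c = g c' ↔ ((a ≤ c.val) ↔ (a ≤ c'.val)) := by
  intro c c'
  rw [hg, hg]
  by_cases hc : a ≤ c.val <;> by_cases hc' : a ≤ c'.val <;> simp [hc, hc', hxy, hxy.symm]

-- general distance lemmas
lemma dist2_of {V : Type*} {G : SimpleGraph V} {u v : V} (hne : u ≠ v) (hnadj : ¬ G.Adj u v)
    (w : V) (h1 : G.Adj u w) (h2 : G.Adj w v) : G.dist u v = 2 := by
  have hle : G.dist u v ≤ 2 := by
    have := SimpleGraph.dist_le (SimpleGraph.Walk.cons h1 (SimpleGraph.Walk.cons h2 SimpleGraph.Walk.nil))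
    simpa using this
  have h0 : G.dist u v ≠ 0 := by
    rw [SimpleGraph.dist_ne_zero_iff_ne_and_reachable]
    exact ⟨hne, SimpleGraph.Walk.reachable (SimpleGraph.Walk.cons h1 (SimpleGraph.Walk.cons h2 SimpleGraph.Walk.nil))⟩
  have h1' : G.dist u v ≠ 1 := fun hc => hnadj (SimpleGraph.dist_eq_one_iff_adj.mp hc)
  omega

lemma common_of_dist2 {V : Type*} {G : SimpleGraph V} {u v : V} (h : G.dist u v = 2) :
    ∃ w, G.Adj u w ∧ G.Adj w v := by
  obtain ⟨p, hp⟩ := SimpleGraph.exists_walk_of_dist_ne_zero (G := G) (u := u) (v := v) (by omega)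
  rw [h] at hp
  refine ⟨p.getVert 1, ?_, ?_⟩
  · have := p.adj_getVert_succ (i := 0) (by omega)
    simpa using this
  · have := p.adj_getVert_succ (i := 1) (by omega)
    have h2 : p.getVert 2 = v := by
      have := p.getVert_length
      rw [hp] at this
      exact this
    rwa [h2] at this

lemma dist3_of {V : Type*} {G : SimpleGraph V} {u v : V} (hne : u ≠ v) (hnadj : ¬ G.Adj u v)
    (hnc : ∀ w, ¬ (G.Adj u w ∧ G.Adj w v)) (w₁ w₂ : V)
    (h1 : G.Adj u w₁) (h2 : G.Adj w₁ w₂) (h3 : G.Adj w₂ v) : G.dist u v = 3 := by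
  have hle : G.dist u v ≤ 3 := by
    have := SimpleGraph.dist_le (SimpleGraph.Walk.cons h1 (SimpleGraph.Walk.cons h2
      (SimpleGraph.Walk.cons h3 SimpleGraph.Walk.nil)))
    simpa using this
  have h0 : G.dist u v ≠ 0 := by
    rw [SimpleGraph.dist_ne_zero_iff_ne_and_reachable]
    exact ⟨hne, SimpleGraph.Walk.reachable (SimpleGraph.Walk.cons h1 (SimpleGraph.Walk.cons h2
      (SimpleGraph.Walk.cons h3 SimpleGraph.Walk.nil)))⟩
  have h1' : G.dist u v ≠ 1 := fun hc => hnadj (SimpleGraph.dist_eq_one_iff_adj.mp hc)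
  have h2' : G.dist u v ≠ 2 := by
    intro hc
    obtain ⟨w, hw1, hw2⟩ := common_of_dist2 hc
    exact hnc w ⟨hw1, hw2⟩
  omega

end Stmt15Aux

section Stmt15Aux2
open SimpleGraph Finset

variable {n : ℕ}

/-- pair constructor for the underlying product -/
def pr (n : ℕ) (j : Fin (n+2)) (b : Fin 2) : ∀ i : Fin 2, Fin (![n,0] i + 2) :=
  Fin.cons j (Fin.cons b finZeroElim)

lemma pr_ext (v : ∀ i : Fin 2, Fin (![n,0] i + 2)) : v = pr n (v 0) (v 1) := by
  funext i
  refine Fin.cases rfl (fun j => ?_) i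
  refine Fin.cases rfl (fun k => k.elim0) j

@[simp] lemma pr_le_pr {j j' : Fin (n+2)} {b b' : Fin 2} :
    pr n j b ≤ pr n j' b' ↔ j ≤ j' ∧ b ≤ b' := by
  constructor
  · intro hle; exact ⟨hle 0, hle 1⟩
  · rintro ⟨h1, h2⟩ i
    refine Fin.cases h1 (fun k => ?_) i
    refine Fin.cases h2 (fun k => k.elim0) k

@[simp] lemma pr_eq_pr {j j' : Fin (n+2)} {b b' : Fin 2} :
    pr n j b = pr n j' b' ↔ j = j' ∧ b = b' := by
  constructor
  · intro hle
    exact ⟨congrFun hle 0, congrFun hle 1⟩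
  · rintro ⟨rfl, rfl⟩; rfl

lemma pr_lt_pr {j j' : Fin (n+2)} {b b' : Fin 2} :
    pr n j b < pr n j' b' ↔ (j ≤ j' ∧ b ≤ b') ∧ ¬ (j = j' ∧ b = b') := by
  rw [lt_iff_le_and_ne]
  simp [pr_le_pr, pr_eq_pr]

lemma bot_eq : (⊥ : ∀ i : Fin 2, Fin (![n,0] i + 2)) = pr n 0 0 := by
  funext i
  refine Fin.cases rfl (fun j => ?_) i
  refine Fin.cases rfl (fun k => k.elim0) j

lemma top_eq : (⊤ : ∀ i : Fin 2, Fin (![n,0] i + 2)) = pr n (Fin.last _) 1 := by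
  funext i
  refine Fin.cases rfl (fun j => ?_) i
  refine Fin.cases rfl (fun k => k.elim0) j

/-- vertex constructor -/
def mkv (j : Fin (n+2)) (b : Fin 2) (h1 : ¬ (j = 0 ∧ b = 0)) (h2 : ¬ (j.val = n+1 ∧ b = 1)) :
    ChainVert ![n,0] :=
  ⟨pr n j b, by
    constructor
    · rw [bot_eq]; simpa using h1
    · rw [top_eq]
      simp only [ne_eq, pr_eq_pr, not_and]
      intro hj hb
      exact h2 ⟨by rw [hj]; rfl, hb⟩⟩

lemma adj_iff (x y : ChainVert (![n,0])) :
    (chainGraph ![n,0]).Adj x y ↔ (x.1 < y.1 ∨ y.1 < x.1) := Iff.rfl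

lemma exists_mkv (x : ChainVert ![n,0]) :
    ∃ (j : Fin (n+2)) (b : Fin 2) (h1 : ¬ (j = 0 ∧ b = 0)) (h2 : ¬ (j.val = n+1 ∧ b = 1)),
      x = mkv j b h1 h2 := by
  obtain ⟨v, hv1, hv2⟩ := x
  refine ⟨v 0, v 1, ?_, ?_, ?_⟩
  · rintro ⟨ha, hb⟩
    exact hv1 (by rw [bot_eq, pr_ext v, ha, hb])
  · rintro ⟨ha, hb⟩
    refine hv2 ?_
    rw [top_eq, pr_ext v, hb]
    have : v 0 = Fin.last (n+1) := by
      apply Fin.ext; exact ha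
    rw [this]
  · apply Subtype.ext
    exact pr_ext v

-- general distance lemmas
/-- The column-1 vertices -/
def uu (n : ℕ) (c : Fin (n+1)) : ChainVert ![n,0] :=
  mkv c.castSucc 1 (by simp) (by
    rintro ⟨hc, -⟩
    have := c.isLt
    simp [Fin.castSucc] at hc
    omega)


@[simp] lemma uu_val (c : Fin (n+1)) : (uu n c).1 = pr n c.castSucc 1 := rfl
@[simp] lemma mkv_val (j : Fin (n+2)) (b : Fin 2) (h1 h2) : (mkv j b h1 h2).1 = pr n j b := rfl

lemma dist_one_chain {x y : ChainVert ![n,0]} (hne : x ≠ y) (hcomp : x.1 ≤ y.1 ∨ y.1 ≤ x.1) :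
    (chainGraph ![n,0]).dist x y = 1 := by
  rw [SimpleGraph.dist_eq_one_iff_adj]
  have hvne : x.1 ≠ y.1 := fun h => hne (Subtype.ext h)
  rcases hcomp with h | h
  · exact Or.inl (lt_of_le_of_ne h hvne)
  · exact Or.inr (lt_of_le_of_ne h hvne.symm)

lemma dist_u_b1 (c : Fin (n+1)) (a : Fin (n+2)) (h1 h2) :
    (chainGraph ![n,0]).dist (uu n c) (mkv a 1 h1 h2) = if c.val = a.val then 0 else 1 := by
  by_cases hca : c.val = a.val
  · rw [if_pos hca]
    have : uu n c = mkv a 1 h1 h2 := by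
      apply Subtype.ext
      show pr n c.castSucc 1 = pr n a 1
      rw [pr_eq_pr]
      exact ⟨Fin.ext hca, rfl⟩
    rw [this, SimpleGraph.dist_self]
  · rw [if_neg hca]
    apply dist_one_chain
    · intro hh
      apply hca
      have := congrArg Subtype.val hh
      rw [uu_val, mkv_val, pr_eq_pr] at this
      exact congrArg Fin.val (this.1)
    · show pr n c.castSucc 1 ≤ pr n a 1 ∨ pr n a 1 ≤ pr n c.castSucc 1
      rcases le_total c.castSucc a with h | h
      · exact Or.inl (pr_le_pr.mpr ⟨h, le_refl _⟩)
      · exact Or.inr (pr_le_pr.mpr ⟨h, le_refl _⟩)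

lemma dist_u_b0_le (c : Fin (n+1)) (a : Fin (n+2)) (h1 h2) (hac : a.val ≤ c.val) :
    (chainGraph ![n,0]).dist (uu n c) (mkv a 0 h1 h2) = 1 := by
  apply dist_one_chain
  · intro hh
    have := congrArg Subtype.val hh
    rw [uu_val, mkv_val, pr_eq_pr] at this
    exact absurd (congrArg Fin.val this.2) (by simp)
  · right
    show pr n a 0 ≤ pr n c.castSucc 1
    exact pr_le_pr.mpr ⟨by rw [Fin.le_def]; simpa using hac, by simp [Fin.le_def]⟩

lemma dist_u_b0_gt (c : Fin (n+1)) (a : Fin (n+2)) (h1 h2) (hgt : c.val < a.val)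
    (hns : ¬ (a.val = n+1 ∧ c.val = 0)) :
    (chainGraph ![n,0]).dist (uu n c) (mkv a 0 h1 h2) = 2 := by
  have hne : uu n c ≠ mkv a 0 h1 h2 := by
    intro hh
    have := congrArg Subtype.val hh
    rw [uu_val, mkv_val, pr_eq_pr] at this
    exact absurd (congrArg Fin.val this.2) (by simp)
  have hnadj : ¬ (chainGraph ![n,0]).Adj (uu n c) (mkv a 0 h1 h2) := by
    rintro (hlt | hlt) <;> simp only [uu_val, mkv_val] at hlt <;> rw [pr_lt_pr] at hlt
    · rcases hlt.1 with ⟨-, hb⟩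
      rw [Fin.le_def] at hb
      simp at hb
    · rcases hlt.1 with ⟨hj, -⟩
      rw [Fin.le_def] at hj
      simp at hj
      omega
  by_cases hc0 : c.val = 0
  · have han : a.val ≤ n := by
      have := a.isLt
      rcases Nat.lt_or_ge a.val (n+1) with h | h
      · omega
      · exact absurd ⟨by omega, hc0⟩ hns
    refine dist2_of hne hnadj (mkv a 1 (by simp) (by rintro ⟨hh, -⟩; omega)) ?_ ?_
    · left
      show pr n c.castSucc 1 < pr n a 1
      rw [pr_lt_pr]
      constructor
      · exact ⟨by rw [Fin.le_def]; simp; omega, le_refl _⟩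
      · rintro ⟨hj, -⟩
        have := congrArg Fin.val hj
        simp at this
        omega
    · right
      show pr n a 0 < pr n a 1
      rw [pr_lt_pr]
      exact ⟨⟨le_refl _, by simp [Fin.le_def]⟩, by rintro ⟨-, hb⟩; exact absurd (congrArg Fin.val hb) (by simp)⟩
  · refine dist2_of hne hnadj (mkv c.castSucc 0 (by
        rintro ⟨hh, -⟩
        exact hc0 (by simpa using congrArg Fin.val hh)) (by rintro ⟨-, hb⟩; exact absurd (congrArg Fin.val hb) (by simp))) ?_ ?_
    · right
      show pr n c.castSucc 0 < pr n c.castSucc 1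
      rw [pr_lt_pr]
      exact ⟨⟨le_refl _, by simp [Fin.le_def]⟩, by rintro ⟨-, hb⟩; exact absurd (congrArg Fin.val hb) (by simp)⟩
    · left
      show pr n c.castSucc 0 < pr n a 0
      rw [pr_lt_pr]
      constructor
      · exact ⟨by rw [Fin.le_def]; simp; omega, le_refl _⟩
      · rintro ⟨hj, -⟩
        have := congrArg Fin.val hj
        simp at this
        omega

lemma dist_u_special (hn : 1 ≤ n) (c : Fin (n+1)) (hc : c.val = 0) (a : Fin (n+2))
    (ha : a.val = n+1) (h1 h2) :
    (chainGraph ![n,0]).dist (uu n c) (mkv a 0 h1 h2) = 3 := by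
  have hne : uu n c ≠ mkv a 0 h1 h2 := by
    intro hh
    have := congrArg Subtype.val hh
    rw [uu_val, mkv_val, pr_eq_pr] at this
    exact absurd (congrArg Fin.val this.2) (by simp)
  have hnadj : ¬ (chainGraph ![n,0]).Adj (uu n c) (mkv a 0 h1 h2) := by
    rintro (hlt | hlt) <;> simp only [uu_val, mkv_val] at hlt <;> rw [pr_lt_pr] at hlt
    · rcases hlt.1 with ⟨-, hb⟩
      rw [Fin.le_def] at hb
      simp at hb
    · rcases hlt.1 with ⟨hj, -⟩
      rw [Fin.le_def] at hj
      simp only [Fin.coe_castSucc] at hj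
      omega
  have hnc : ∀ z, ¬ ((chainGraph ![n,0]).Adj (uu n c) z ∧ (chainGraph ![n,0]).Adj z (mkv a 0 h1 h2)) := by
    rintro ⟨v, hv1, hv2⟩ ⟨hadj1, hadj2⟩
    have hz : v = pr n (v 0) (v 1) := pr_ext v
    rcases hadj2 with hlt | hlt <;>
      simp only [uu_val, mkv_val, SimpleGraph.comap] at hlt <;>
      rw [hz] at hlt <;> replace hlt := pr_lt_pr.mp hlt
    · -- pr (v0) (v1) < pr a 0 : so v 1 = 0
      have hb : (v 1).val = 0 := by
        have := hlt.1.2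
        replace this := Fin.le_def.mp this
        simpa using this
      -- now adj1 : (0,1) ~ (e,0)
      rcases hadj1 with hlt' | hlt' <;>
        simp only [uu_val, mkv_val] at hlt' <;>
        rw [hz] at hlt' <;> replace hlt' := pr_lt_pr.mp hlt'
      · have := hlt'.1.2
        replace this := Fin.le_def.mp this
        omega
      · have he : (v 0).val = 0 := by
          have := hlt'.1.1
          replace this := Fin.le_def.mp this
          simp only [Fin.coe_castSucc] at this
          omega
        apply hv1
        rw [bot_eq, hz]
        refine pr_eq_pr.mpr ?_
        exact ⟨Fin.ext (by simpa using he), Fin.ext (by simpa using hb)⟩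
    · -- pr a 0 < pr (v0) (v1) : v0 = a (top value), so v 1 = 1, z = top
      have he : (v 0).val = n+1 := by
        have := hlt.1.1
        replace this := Fin.le_def.mp this
        have := (v 0).isLt
        omega
      have hb : (v 1).val = 1 := by
        have hne2 := hlt.2
        by_contra hb
        have hb0 : v 1 = 0 := Fin.ext (by omega)
        exact hne2 ⟨Fin.ext (by omega), hb0.symm⟩
      apply hv2
      rw [top_eq, hz]; refine pr_eq_pr.mpr ?_
      exact ⟨Fin.ext (by simpa using he), Fin.ext (by simpa using hb)⟩
  have hval1 : ((1 : Fin (n+2))).val = 1 := by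
    simp [Fin.val_one]
  refine dist3_of hne hnadj hnc
    (mkv 1 1 (by simp) (by rintro ⟨hh, -⟩; omega))
    (mkv 1 0 (by simp) (by rintro ⟨-, hb⟩; exact absurd (congrArg Fin.val hb) (by simp)))
    ?_ ?_ ?_
  · left
    show pr n c.castSucc 1 < pr n 1 1
    rw [pr_lt_pr]
    constructor
    · exact ⟨by rw [Fin.le_def]; simp; omega, le_refl _⟩
    · rintro ⟨hj, -⟩
      have := congrArg Fin.val hj
      simp only [Fin.coe_castSucc] at this
      omega
  · right
    show pr n 1 0 < pr n 1 1
    rw [pr_lt_pr]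
    exact ⟨⟨le_refl _, by simp [Fin.le_def]⟩, by rintro ⟨-, hb⟩; exact absurd (congrArg Fin.val hb) (by simp)⟩
  · left
    show pr n 1 0 < pr n a 0
    rw [pr_lt_pr]
    constructor
    · exact ⟨by rw [Fin.le_def]; omega, le_refl _⟩
    · rintro ⟨hj, -⟩
      have := congrArg Fin.val hj
      omega

end Stmt15Aux2

section Stmt15Aux3
open SimpleGraph Finset

variable {n : ℕ}

/-- distance value formula -/
def Dv (n jv bv cv : ℕ) : ℕ :=
  if bv = 1 then (if cv = jv then 0 else 1)
  else if jv ≤ cv then 1 else if jv = n+1 ∧ cv = 0 then 3 else 2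

lemma dist_formula (hn : 1 ≤ n) (c : Fin (n+1)) (j : Fin (n+2)) (b : Fin 2) (h1 h2) :
    (chainGraph ![n,0]).dist (uu n c) (mkv j b h1 h2) = Dv n j.val b.val c.val := by
  have hb : b.val = 0 ∨ b.val = 1 := by omega
  rcases hb with hb | hb
  · have hbeq : b = 0 := Fin.ext (by simpa using hb)
    subst hbeq
    simp only [Dv, Fin.val_zero]
    rw [if_neg (by omega)]
    by_cases hle : j.val ≤ c.val
    · rw [if_pos hle]
      exact dist_u_b0_le c j h1 h2 hle
    · rw [if_neg hle]
      by_cases hsp : j.val = n+1 ∧ c.val = 0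
      · rw [if_pos hsp]
        exact dist_u_special hn c hsp.2 j hsp.1 h1 h2
      · rw [if_neg hsp]
        exact dist_u_b0_gt c j h1 h2 (by omega) hsp
  · have hbeq : b = 1 := Fin.ext (by simpa using hb)
    subst hbeq
    simp only [Dv, Fin.val_one, if_pos rfl]
    exact dist_u_b1 c j h1 h2

lemma Dv0_aux (hn : 1 ≤ n) {p q : ℕ} (hp : 1 ≤ p) (hpq : p < q) (hq : q ≤ n+1)
    (h : ∀ cv, cv < n → Dv n p 0 cv = Dv n q 0 cv) : False := by
  rcases Nat.lt_or_ge q (n+1) with hqn | hqn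
  · have hc := h (q-1) (by omega)
    simp only [Dv, and_true, true_and] at hc
    split_ifs at hc <;> first | omega | contradiction
  · rcases Nat.lt_or_ge p n with hpn | hpn
    · have hc := h (n-1) (by omega)
      simp only [Dv, and_true, true_and] at hc
      split_ifs at hc <;> first | omega | contradiction
    · have hc := h 0 (by omega)
      simp only [Dv, and_true, true_and] at hc
      split_ifs at hc <;> first | omega | contradiction

lemma Dv1_aux (hn : 1 ≤ n) {p q : ℕ} (hpn : p < n) (hne : p ≠ q)
    (h : ∀ cv, cv < n → Dv n p 1 cv = Dv n q 1 cv) : False := by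
  have hc := h p hpn
  simp only [Dv, and_true, true_and] at hc
  split_ifs at hc <;> first | omega | contradiction

lemma Dv_inj (hn : 1 ≤ n) {jv j'v bv b'v : ℕ}
    (hb : bv ≤ 1) (hb' : b'v ≤ 1) (hj : jv ≤ n+1) (hj' : j'v ≤ n+1)
    (h1 : bv = 0 → 1 ≤ jv) (h1' : b'v = 0 → 1 ≤ j'v)
    (h2 : bv = 1 → jv ≤ n) (h2' : b'v = 1 → j'v ≤ n)
    (h : ∀ cv, cv < n → Dv n jv bv cv = Dv n j'v b'v cv) : jv = j'v ∧ bv = b'v := by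
  interval_cases bv <;> interval_cases b'v
  · -- 0 0
    refine ⟨?_, rfl⟩
    by_contra hne
    rcases Nat.lt_or_ge jv j'v with hlt | hge
    · exact Dv0_aux hn (h1 rfl) hlt hj' h
    · have hlt : j'v < jv := by omega
      exact Dv0_aux hn (h1' rfl) hlt hj (fun cv hcv => (h cv hcv).symm)
  · -- 0 1
    exfalso
    have hjv := h1 rfl
    have hc := h 0 (by omega)
    simp only [Dv, and_true, true_and] at hc
    split_ifs at hc <;> first | omega | contradiction
  · -- 1 0
    exfalso
    have hjv := h1' rfl
    have hc := h 0 (by omega)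
    simp only [Dv, and_true, true_and] at hc
    split_ifs at hc <;> first | omega | contradiction
  · -- 1 1
    refine ⟨?_, rfl⟩
    by_contra hne
    rcases Nat.lt_or_ge jv n with hlt | hge
    · exact Dv1_aux hn hlt hne h
    · have hj'n : j'v < n := by omega
      exact Dv1_aux hn hj'n (by omega) (fun cv hcv => (h cv hcv).symm)

end Stmt15Aux3

section Stmt15Aux4
open SimpleGraph Finset

variable {n : ℕ}

lemma struct_w (hn : 1 ≤ n) (w : ChainVert ![n,0]) :
    (∃ a : ℕ, ∀ c c' : Fin (n+1),
        (chainGraph ![n,0]).dist (uu n c) w = (chainGraph ![n,0]).dist (uu n c') w ↔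
          ((a ≤ c.val) ↔ (a ≤ c'.val))) ∨
    (∃ a : Fin (n+1), ∀ c c' : Fin (n+1),
        (chainGraph ![n,0]).dist (uu n c) w = (chainGraph ![n,0]).dist (uu n c') w ↔
          (c = a ↔ c' = a)) := by
  obtain ⟨j, b, h1, h2, rfl⟩ := exists_mkv w
  set g : Fin (n+1) → ℕ := fun c => (chainGraph ![n,0]).dist (uu n c) (mkv j b h1 h2) with hg
  have hgD : ∀ c, g c = Dv n j.val b.val c.val := fun c => dist_formula hn c j b h1 h2
  have hb : b.val = 0 ∨ b.val = 1 := by omega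
  rcases hb with hb | hb
  · by_cases hj : j.val = n+1
    · right
      refine ⟨⟨0, by omega⟩, iff_point g ⟨0, by omega⟩ 3 2 (by omega) ?_⟩
      intro c
      rw [hgD]
      simp only [Dv]
      have hcl := c.isLt
      rw [if_neg (by omega), if_neg (by omega)]
      by_cases hc : c.val = 0
      · rw [if_pos ⟨hj, hc⟩, if_pos (Fin.ext hc)]
      · rw [if_neg (fun hh => hc hh.2), if_neg (fun hh => hc (congrArg Fin.val hh))]
    · left
      refine ⟨j.val, iff_cut g j.val 1 2 (by omega) ?_⟩
      intro c
      rw [hgD]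
      simp only [Dv]
      rw [if_neg (by omega)]
      by_cases hle : j.val ≤ c.val
      · rw [if_pos hle, if_pos hle]
      · rw [if_neg hle, if_neg hle, if_neg (fun hh => hj hh.1)]
  · right
    have hjn : j.val ≤ n := by
      have hlt := j.isLt
      have : ¬ (j.val = n+1) := fun hh => h2 ⟨hh, Fin.ext (by simpa using hb)⟩
      omega
    refine ⟨⟨j.val, by omega⟩, iff_point g ⟨j.val, by omega⟩ 0 1 (by omega) ?_⟩
    intro c
    rw [hgD]
    simp only [Dv]
    rw [if_pos hb]
    by_cases hc : c.val = j.val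
    · rw [if_pos hc, if_pos (Fin.ext hc)]
    · rw [if_neg hc, if_neg (fun hh => hc (congrArg Fin.val hh))]

end Stmt15Aux4


theorem stmt15 (n₁ : ℕ) (h : 1 ≤ n₁) :
    metricDim (chainGraph ![n₁, 0]) = n₁ := by
  classical
  have huuinj : ∀ c c' : Fin (n₁+1), uu n₁ c = uu n₁ c' → c = c' := by
    intro c c' hcc
    have hv := congrArg Subtype.val hcc
    rw [uu_val, uu_val, pr_eq_pr] at hv
    have := congrArg Fin.val hv.1
    simp only [Fin.coe_castSucc] at this
    exact Fin.ext this
  set S₀ : Finset (ChainVert ![n₁,0]) :=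
    Finset.image (fun c : Fin n₁ => uu n₁ c.castSucc) Finset.univ with hS₀
  have hcard : S₀.card = n₁ := by
    rw [hS₀, Finset.card_image_of_injective _
      (fun c c' hcc => Fin.castSucc_injective _ (huuinj _ _ hcc)),
      Finset.card_univ, Fintype.card_fin]
  have hres : IsResolving (chainGraph ![n₁,0]) ↑S₀ := by
    intro x y hxy
    obtain ⟨j, b, hj1, hj2, rfl⟩ := exists_mkv x
    obtain ⟨j', b', hj1', hj2', rfl⟩ := exists_mkv y
    have hdv : ∀ cv, cv < n₁ → Dv n₁ j.val b.val cv = Dv n₁ j'.val b'.val cv := by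
      intro cv hcv
      have hmem : uu n₁ (⟨cv, Nat.lt_succ_of_lt hcv⟩ : Fin (n₁+1)) ∈ (↑S₀ : Set _) := by
        have hcast : (⟨cv, Nat.lt_succ_of_lt hcv⟩ : Fin (n₁+1)) = (⟨cv, hcv⟩ : Fin n₁).castSucc :=
          Fin.ext rfl
        rw [hS₀, hcast]
        exact Finset.mem_coe.mpr (Finset.mem_image_of_mem _ (Finset.mem_univ _))
      have hd := hxy _ hmem
      rw [SimpleGraph.dist_comm (u := mkv j b hj1 hj2),
        SimpleGraph.dist_comm (u := mkv j' b' hj1' hj2')] at hd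
      rw [dist_formula h _ j b hj1 hj2, dist_formula h _ j' b' hj1' hj2'] at hd
      exact hd
    have hb : b.val ≤ 1 := by omega
    have hb' : b'.val ≤ 1 := by omega
    have hjle : j.val ≤ n₁+1 := by have := j.isLt; omega
    have hjle' : j'.val ≤ n₁+1 := by have := j'.isLt; omega
    have hc1 : b.val = 0 → 1 ≤ j.val := by
      intro hb0
      by_contra hj0
      exact hj1 ⟨Fin.ext (by simp only [Fin.val_zero]; omega), Fin.ext (by simpa using hb0)⟩
    have hc1' : b'.val = 0 → 1 ≤ j'.val := by
      intro hb0
      by_contra hj0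
      exact hj1' ⟨Fin.ext (by simp only [Fin.val_zero]; omega), Fin.ext (by simpa using hb0)⟩
    have hc2 : b.val = 1 → j.val ≤ n₁ := by
      intro hb1
      by_contra hjn
      exact hj2 ⟨by omega, Fin.ext (by simpa using hb1)⟩
    have hc2' : b'.val = 1 → j'.val ≤ n₁ := by
      intro hb1
      by_contra hjn
      exact hj2' ⟨by omega, Fin.ext (by simpa using hb1)⟩
    obtain ⟨hjj, hbb⟩ := Dv_inj h hb hb' hjle hjle' hc1 hc1' hc2 hc2' hdv
    apply Subtype.ext
    rw [mkv_val, mkv_val, pr_eq_pr]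
    exact ⟨Fin.ext hjj, Fin.ext hbb⟩
  have hlow : ∀ k : ℕ,
      (∃ S : Finset (ChainVert ![n₁,0]), S.card = k ∧ IsResolving (chainGraph ![n₁,0]) ↑S) →
      n₁ ≤ k := by
    rintro k ⟨S, rfl, hresS⟩
    have hkey := key_sep (fun w c => (chainGraph ![n₁,0]).dist (uu n₁ c) w) S
      (Finset.univ : Finset (Fin (n₁+1)))
      (fun w _ => struct_w h w)
      (by
        intro c _ c' _ hf
        exact huuinj c c' (hresS (uu n₁ c) (uu n₁ c') (fun w hw => hf w hw)))
    have huniv : (Finset.univ : Finset (Fin (n₁+1))).card = n₁+1 := by simp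
    omega
  refine le_antisymm (Nat.sInf_le ⟨S₀, hcard, hres⟩) (le_csInf ⟨n₁, S₀, hcard, hres⟩ ?_)
  rintro k ⟨S, hSc, hresS⟩
  exact hlow k ⟨S, hSc, hresS⟩
end
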